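/- arXiv:math/0507281 — 5 statements merged into one kernel-verified Lean document; each statement's English description precedes it below -/
import Mathlib

section
/- Let n ≥ 4 be an integer and let x_1, …, x_n be real numbers with 0 < x_i < π for all i. Then Σ_{k=1}^∞ sin(k x_1)·sin(k x_2)·(∏_{i=3}^n sin(k x_i))/k^{n−2} ≤ Σ_{k=1}^∞ (sin(k(x_1+x_2)/2))^2·(∏_{i=3}^n sin(k x_i))/k^{n−2}. That is, replacing two side-lengths by their average does not decrease the symplectic volume of the moduli space of spherical polygons. -/
open Real Finset
set_option maxHeartbeats 1000000


noncomputable def sp (L : List ℝ) (k : ℕ) : ℝ :=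
  (L.map (fun a => Real.sin (((k : ℝ) + 1) * a))).prod

noncomputable def SS (L : List ℝ) (c : ℝ) : ℝ :=
  ∑' k : ℕ, sp L k * Real.cos (((k : ℝ) + 1) * c) / ((k : ℝ) + 1) ^ L.length

noncomputable def Cf (t : ℝ) : ℝ :=
  ∑' k : ℕ, Real.cos (((k : ℝ) + 1) * t) / ((k : ℝ) + 1) ^ 2

lemma summable_inv_sq : Summable (fun k : ℕ => 1 / ((k : ℝ) + 1) ^ 2) := by
  have h : Summable (fun n : ℕ => 1 / (n : ℝ) ^ 2) := summable_one_div_nat_pow.mpr one_lt_two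
  have h2 := (summable_nat_add_iff 1).mpr h
  refine h2.congr fun k => ?_
  push_cast
  ring_nf

lemma summable_of_bound {f : ℕ → ℝ} (h : ∀ k, |f k| ≤ 1 / ((k : ℝ) + 1) ^ 2) : Summable f :=
  Summable.of_norm_bounded summable_inv_sq h

lemma abs_sp_le (L : List ℝ) (k : ℕ) : |sp L k| ≤ 1 := by
  induction L with
  | nil => simp [sp]
  | cons a L ih =>
    have h1 : |Real.sin (((k : ℝ) + 1) * a)| ≤ 1 :=
      abs_le.mpr ⟨Real.neg_one_le_sin _, Real.sin_le_one _⟩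
    calc |sp (a :: L) k| = |Real.sin (((k : ℝ) + 1) * a)| * |sp L k| := by
          simp [sp, abs_mul]
      _ ≤ 1 * 1 := mul_le_mul h1 ih (abs_nonneg _) zero_le_one
      _ = 1 := by ring

lemma Kpos (k : ℕ) : (0:ℝ) < (k : ℝ) + 1 := by positivity

lemma SS_term_bound (L : List ℝ) (h2 : 2 ≤ L.length) (c : ℝ) (k : ℕ) :
    |sp L k * Real.cos (((k : ℝ) + 1) * c) / ((k : ℝ) + 1) ^ L.length| ≤ 1 / ((k : ℝ) + 1) ^ 2 := by
  have hK := Kpos k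
  have hpow : ((k:ℝ)+1) ^ 2 ≤ ((k:ℝ)+1) ^ L.length :=
    pow_le_pow_right₀ (by linarith) h2
  have hnum : |sp L k * Real.cos (((k : ℝ) + 1) * c)| ≤ 1 := by
    rw [abs_mul]
    exact mul_le_one₀ (abs_sp_le L k)
      (abs_nonneg _) (abs_le.mpr ⟨Real.neg_one_le_cos _, Real.cos_le_one _⟩)
  rw [abs_div, abs_of_pos (by positivity : (0:ℝ) < ((k:ℝ)+1) ^ L.length)]
  calc |sp L k * Real.cos (((k : ℝ) + 1) * c)| / ((k:ℝ)+1) ^ L.length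
      ≤ 1 / ((k:ℝ)+1) ^ L.length := by
        gcongr
    _ ≤ 1 / ((k:ℝ)+1) ^ 2 := by
        apply one_div_le_one_div_of_le (by positivity) hpow

lemma SS_summable (L : List ℝ) (h2 : 2 ≤ L.length) (c : ℝ) :
    Summable (fun k : ℕ => sp L k * Real.cos (((k : ℝ) + 1) * c) / ((k : ℝ) + 1) ^ L.length) :=
  summable_of_bound (SS_term_bound L h2 c)

lemma Cf_summable (t : ℝ) : Summable (fun k : ℕ => Real.cos (((k : ℝ) + 1) * t) / ((k : ℝ) + 1) ^ 2) := by
  apply summable_of_bound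
  intro k
  rw [abs_div, abs_of_pos (by positivity : (0:ℝ) < ((k:ℝ)+1) ^ 2)]
  gcongr
  exact abs_le.mpr ⟨Real.neg_one_le_cos _, Real.cos_le_one _⟩

lemma SS_even (L : List ℝ) (c : ℝ) : SS L (-c) = SS L c := by
  unfold SS
  apply tsum_congr
  intro k
  rw [mul_neg, Real.cos_neg]

lemma SS_periodic (L : List ℝ) (c : ℝ) : SS L (c + 2 * π) = SS L c := by
  unfold SS
  apply tsum_congr
  intro k
  have h : ((k:ℝ)+1) * (c + 2*π) = ((k:ℝ)+1)*c + ((k+1 : ℕ) : ℝ) * (2*π) := by push_cast; ring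
  rw [h, Real.cos_add_nat_mul_two_pi]

lemma Cf_even (t : ℝ) : Cf (-t) = Cf t := by
  unfold Cf
  apply tsum_congr
  intro k
  rw [mul_neg, Real.cos_neg]

lemma Cf_periodic (t : ℝ) : Cf (t + 2 * π) = Cf t := by
  unfold Cf
  apply tsum_congr
  intro k
  have h : ((k:ℝ)+1) * (t + 2*π) = ((k:ℝ)+1)*t + ((k+1 : ℕ) : ℝ) * (2*π) := by push_cast; ring
  rw [h, Real.cos_add_nat_mul_two_pi]

lemma SS_cont (L : List ℝ) (h2 : 2 ≤ L.length) : Continuous (SS L) := by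
  apply continuous_tsum (u := fun k : ℕ => 1 / ((k : ℝ) + 1) ^ 2)
  · intro k; fun_prop
  · exact summable_inv_sq
  · intro k x; exact SS_term_bound L h2 x k

lemma bern2_eval (x : ℝ) : (Polynomial.map (algebraMap ℚ ℝ) (Polynomial.bernoulli 2)).eval x
    = x ^ 2 - x + 1 / 6 := by
  have hb2 : _root_.bernoulli 2 = 1/6 := by
    rw [bernoulli_eq_bernoulli'_of_ne_one (by decide), bernoulli'_two]
  simp_rw [Polynomial.bernoulli, Finset.sum_range_succ, Finset.sum_range_zero,
    Polynomial.map_add, Polynomial.map_monomial, Polynomial.eval_add,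
    Polynomial.eval_monomial, hb2, bernoulli_one, bernoulli_zero]
  norm_num
  ring

lemma Cf_eval' (t : ℝ) (h0 : 0 ≤ t) (h2 : t ≤ 2 * π) :
    HasSum (fun k : ℕ => Real.cos (((k : ℝ) + 1) * t) / ((k : ℝ) + 1) ^ 2)
      (t ^ 2 / 4 - π * t / 2 + π ^ 2 / 6) := by
  have hπ : (0:ℝ) < π := Real.pi_pos
  have hx : t / (2 * π) ∈ Set.Icc (0:ℝ) 1 := by
    constructor
    · positivity
    · rw [div_le_one (by positivity)]; linarith
  have H := hasSum_one_div_nat_pow_mul_cos one_ne_zero hx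
  have harg : ∀ n : ℕ, 2 * π * n * (t / (2 * π)) = n * t := by
    intro n; field_simp
  have hfun : (fun n : ℕ => 1 / (n : ℝ) ^ (2 * 1) * Real.cos (2 * π * n * (t / (2 * π))))
      = fun n : ℕ => Real.cos ((n : ℝ) * t) / (n : ℝ) ^ 2 := by
    funext n; rw [harg n]; ring_nf
  rw [hfun] at H
  have hval : ((-1 : ℝ) ^ (1 + 1) * (2 * π) ^ (2 * 1) / 2 / Nat.factorial (2 * 1) *
      (Polynomial.map (algebraMap ℚ ℝ) (Polynomial.bernoulli (2 * 1))).eval (t / (2 * π)))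
      = t ^ 2 / 4 - π * t / 2 + π ^ 2 / 6 := by
    norm_num [Nat.factorial]
    rw [Polynomial.aeval_def, ← Polynomial.eval_map, bern2_eval]
    field_simp
    ring
  rw [hval] at H
  have H2 : HasSum (fun n : ℕ => Real.cos (((n + 1 : ℕ) : ℝ) * t) / ((n + 1 : ℕ) : ℝ) ^ 2)
      (t ^ 2 / 4 - π * t / 2 + π ^ 2 / 6) := by
    have hz : ∑ i ∈ Finset.range 1, Real.cos ((i : ℝ) * t) / (i : ℝ) ^ 2 = 0 := by simp
    exact (hasSum_nat_add_iff 1).mpr (by rw [hz, add_zero]; exact H)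
  have hfun2 : (fun n : ℕ => Real.cos (((n + 1 : ℕ) : ℝ) * t) / ((n + 1 : ℕ) : ℝ) ^ 2)
      = (fun k : ℕ => Real.cos (((k : ℝ) + 1) * t) / ((k : ℝ) + 1) ^ 2) := by
    funext n; push_cast; ring_nf
  rw [hfun2] at H2
  exact H2

lemma Cf_eval (t : ℝ) (h0 : 0 ≤ t) (h2 : t ≤ 2 * π) :
    Cf t = t ^ 2 / 4 - π * t / 2 + π ^ 2 / 6 := (Cf_eval' t h0 h2).tsum_eq

lemma Cf_pair_nonneg {t c : ℝ} (ht : 0 ≤ t) (hc : 0 ≤ c) (h : t + c ≤ 2 * π) :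
    Cf (t + c) + Cf (t - c) = (t ^ 2 + c ^ 2) / 2 - π * max t c + π ^ 2 / 3 := by
  rcases le_total c t with h1 | h1
  · rw [max_eq_left h1, Cf_eval (t + c) (by linarith) h,
      Cf_eval (t - c) (by linarith) (by linarith)]
    ring
  · rw [max_eq_right h1, show t - c = -(c - t) by ring, Cf_even,
      Cf_eval (t + c) (by linarith) h, Cf_eval (c - t) (by linarith) (by linarith)]
    ring

lemma Cf_pair {t c : ℝ} (hc : 0 ≤ c) (h : |t| + c ≤ 2 * π) :
    Cf (t + c) + Cf (t - c) = (t ^ 2 + c ^ 2) / 2 - π * max |t| c + π ^ 2 / 3 := by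
  rcases le_total 0 t with h1 | h1
  · rw [abs_of_nonneg h1] at h ⊢
    exact Cf_pair_nonneg h1 hc h
  · rw [abs_of_nonpos h1] at h ⊢
    have := Cf_pair_nonneg (t := -t) (c := c) (by linarith) hc h
    rw [show -t + c = -(t - c) by ring, show -t - c = -(t + c) by ring, Cf_even, Cf_even] at this
    rw [show t ^ 2 = (-t) ^ 2 by ring]
    linarith [this]

lemma SS_pair (a b c : ℝ) :
    SS [a, b] c = (Cf (a - b + c) + Cf (a - b - c) - Cf (a + b + c) - Cf (a + b - c)) / 4 := by
  have key : ∀ k : ℕ,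
      sp [a, b] k * Real.cos (((k : ℝ) + 1) * c) / ((k : ℝ) + 1) ^ ([a, b].length)
      = (Real.cos (((k : ℝ) + 1) * (a - b + c)) / ((k : ℝ) + 1) ^ 2
        + Real.cos (((k : ℝ) + 1) * (a - b - c)) / ((k : ℝ) + 1) ^ 2
        - Real.cos (((k : ℝ) + 1) * (a + b + c)) / ((k : ℝ) + 1) ^ 2
        - Real.cos (((k : ℝ) + 1) * (a + b - c)) / ((k : ℝ) + 1) ^ 2) / 4 := by
    intro k
    set K := (k : ℝ) + 1 with hK
    have e : ∀ A B C : ℝ, Real.sin A * Real.sin B * Real.cos C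
        = (Real.cos (A - B + C) + Real.cos (A - B - C)
          - Real.cos (A + B + C) - Real.cos (A + B - C)) / 4 := by
      intros A B C
      simp only [Real.cos_add, Real.cos_sub]
      ring
    have hsp : sp [a, b] k = Real.sin (K * a) * Real.sin (K * b) := by
      simp [sp, hK]
    rw [hsp, show K * (a - b + c) = K * a - K * b + K * c by ring,
      show K * (a - b - c) = K * a - K * b - K * c by ring,
      show K * (a + b + c) = K * a + K * b + K * c by ring,
      show K * (a + b - c) = K * a + K * b - K * c by ring,
      show ([a, b] : List ℝ).length = 2 from rfl]
    rw [show Real.sin (K * a) * Real.sin (K * b) * Real.cos (K * c) / K ^ 2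
        = (Real.sin (K * a) * Real.sin (K * b) * Real.cos (K * c)) / K ^ 2 by ring,
      e (K * a) (K * b) (K * c)]
    ring
  unfold SS
  rw [tsum_congr key, tsum_div_const,
    Summable.tsum_sub (((Cf_summable _).add (Cf_summable _)).sub (Cf_summable _)) (Cf_summable _),
    Summable.tsum_sub ((Cf_summable _).add (Cf_summable _)) (Cf_summable _),
    Summable.tsum_add (Cf_summable _) (Cf_summable _)]
  rfl
lemma max_sub_max_le {A B c c' : ℝ} (hBA : B ≤ A) (hcc : c ≤ c') :
    max A c' - max B c' ≤ max A c - max B c := by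
  rcases le_total A c' with h1 | h1 <;> rcases le_total A c with h2 | h2 <;>
    rcases le_total B c' with h3 | h3 <;> rcases le_total B c with h4 | h4 <;>
    simp only [max_eq_left, max_eq_right, h1, h2, h3, h4] <;> linarith

lemma mono_base {a b : ℝ} (ha : 0 < a) (ha' : a < π) (hb : 0 < b) (hb' : b < π)
    {c c' : ℝ} (h0 : 0 ≤ c) (hcc : c ≤ c') (hcp : c' ≤ π) :
    SS [a, b] c' ≤ SS [a, b] c := by
  have hπ := Real.pi_pos
  have h0' : 0 ≤ c' := le_trans h0 hcc
  have hcpi : c ≤ π := le_trans hcc hcp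
  have habs : |a - b| ≤ a + b := abs_le.mpr ⟨by linarith, by linarith⟩
  have habs2 : |a - b| ≤ 2 * π - (a + b) := abs_le.mpr ⟨by linarith, by linarith⟩
  rw [SS_pair, SS_pair]
  have pd : Cf (a - b + c) + Cf (a - b - c)
      = ((a - b) ^ 2 + c ^ 2) / 2 - π * max |a - b| c + π ^ 2 / 3 :=
    Cf_pair h0 (by cases abs_cases (a - b) <;> linarith)
  have pd' : Cf (a - b + c') + Cf (a - b - c')
      = ((a - b) ^ 2 + c' ^ 2) / 2 - π * max |a - b| c' + π ^ 2 / 3 :=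
    Cf_pair h0' (by cases abs_cases (a - b) <;> linarith)
  rcases le_total (a + b + c') (2 * π) with hB' | hB'
  · -- both "A" regime
    have ps : Cf (a + b + c) + Cf (a + b - c)
        = ((a + b) ^ 2 + c ^ 2) / 2 - π * max (a + b) c + π ^ 2 / 3 := by
      have := Cf_pair (t := a + b) h0 (by rw [abs_of_nonneg (by linarith)]; linarith)
      rwa [abs_of_nonneg (by linarith : (0:ℝ) ≤ a + b)] at this
    have ps' : Cf (a + b + c') + Cf (a + b - c')
        = ((a + b) ^ 2 + c' ^ 2) / 2 - π * max (a + b) c' + π ^ 2 / 3 := by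
      have := Cf_pair (t := a + b) h0' (by rw [abs_of_nonneg (by linarith)]; linarith)
      rwa [abs_of_nonneg (by linarith : (0:ℝ) ≤ a + b)] at this
    have hmax := max_sub_max_le (A := a + b) (B := |a - b|) habs hcc
    have hmul := mul_le_mul_of_nonneg_left hmax hπ.le
    nlinarith [hmul, pd, pd', ps, ps']
  · -- c' in "B" regime
    have hs_big : π ≤ a + b := by linarith
    have hd1' : Cf (a + b + c') = Cf (a + b + c' - 2 * π) := by
      have h := Cf_periodic (a + b + c' - 2 * π)
      rw [show a + b + c' - 2 * π + 2 * π = a + b + c' by ring] at h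
      exact h
    have he1' : Cf (a + b + c' - 2 * π)
        = (a + b + c' - 2 * π) ^ 2 / 4 - π * (a + b + c' - 2 * π) / 2 + π ^ 2 / 6 :=
      Cf_eval _ (by linarith) (by linarith)
    have he2' : Cf (a + b - c')
        = (a + b - c') ^ 2 / 4 - π * (a + b - c') / 2 + π ^ 2 / 6 :=
      Cf_eval _ (by linarith) (by linarith)
    have hmaxd' : max |a - b| c' = c' := max_eq_right (by linarith)
    rcases le_total (a + b + c) (2 * π) with hBc | hBc
    · -- c in "A" regime
      have ps : Cf (a + b + c) + Cf (a + b - c)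
          = ((a + b) ^ 2 + c ^ 2) / 2 - π * max (a + b) c + π ^ 2 / 3 := by
        have := Cf_pair (t := a + b) h0 (by rw [abs_of_nonneg (by linarith)]; linarith)
        rwa [abs_of_nonneg (by linarith : (0:ℝ) ≤ a + b)] at this
      have hmaxs : max (a + b) c = a + b := max_eq_left (by linarith)
      have hmaxd_le : max |a - b| c ≤ 2 * π - (a + b) := max_le habs2 (by linarith)
      have hmul := mul_le_mul_of_nonneg_left hmaxd_le hπ.le
      nlinarith [hmul, pd, pd', ps, hd1', he1', he2', hmaxd', hmaxs]
    · -- both in "B" regime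
      have hd1 : Cf (a + b + c) = Cf (a + b + c - 2 * π) := by
        have h := Cf_periodic (a + b + c - 2 * π)
        rw [show a + b + c - 2 * π + 2 * π = a + b + c by ring] at h
        exact h
      have he1 : Cf (a + b + c - 2 * π)
          = (a + b + c - 2 * π) ^ 2 / 4 - π * (a + b + c - 2 * π) / 2 + π ^ 2 / 6 :=
        Cf_eval _ (by linarith) (by linarith)
      have he2 : Cf (a + b - c)
          = (a + b - c) ^ 2 / 4 - π * (a + b - c) / 2 + π ^ 2 / 6 :=
        Cf_eval _ (by linarith) (by linarith)
      have hmaxd : max |a - b| c = c := max_eq_right (by linarith)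
      nlinarith [pd, pd', hd1, hd1', he1, he1', he2, he2', hmaxd, hmaxd']
lemma SS_cons (a : ℝ) (L : List ℝ) (h2 : 2 ≤ L.length) (c : ℝ) :
    SS (a :: L) c = (1 / 2) * ∫ t in (c - a)..(c + a), SS L t := by
  classical
  set F : ℕ → C(ℝ, ℝ) := fun k =>
    ⟨fun t => sp L k * Real.cos (((k : ℝ) + 1) * t) / ((k : ℝ) + 1) ^ L.length, by fun_prop⟩
    with hF
  have hnorm : ∀ k, ‖(F k).restrict (⟨Set.uIcc (c - a) (c + a), isCompact_uIcc⟩ :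
      TopologicalSpace.Compacts ℝ)‖ ≤ 1 / ((k : ℝ) + 1) ^ 2 := by
    intro k
    rw [ContinuousMap.norm_le _ (by positivity)]
    rintro ⟨x, hx⟩
    simpa only [ContinuousMap.restrict_apply, hF, ContinuousMap.coe_mk, Real.norm_eq_abs]
      using SS_term_bound L h2 x k
  have hsum : Summable fun k => ‖(F k).restrict (⟨Set.uIcc (c - a) (c + a), isCompact_uIcc⟩ :
      TopologicalSpace.Compacts ℝ)‖ :=
    Summable.of_nonneg_of_le (fun k => norm_nonneg _) hnorm summable_inv_sq
  have swap := intervalIntegral.tsum_intervalIntegral_eq_of_summable_norm (a := c - a) (b := c + a) hsum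
  have hSSL : ∀ t : ℝ, (∑' k : ℕ, F k t) = SS L t := by
    intro t; rfl
  have hint : ∀ k : ℕ, (∫ t in (c - a)..(c + a), F k t)
      = sp L k / ((k : ℝ) + 1) ^ L.length *
        (((k : ℝ) + 1)⁻¹ * (Real.sin (((k : ℝ) + 1) * (c + a)) - Real.sin (((k : ℝ) + 1) * (c - a)))) := by
    intro k
    have hK : ((k : ℝ) + 1) ≠ 0 := (Kpos k).ne'
    have e1 : (fun t => (F k) t) = fun t => (sp L k / ((k : ℝ) + 1) ^ L.length) *
        Real.cos (((k : ℝ) + 1) * t) := by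
      funext t; simp only [hF, ContinuousMap.coe_mk]; ring
    rw [e1, intervalIntegral.integral_const_mul]
    congr 1
    rw [intervalIntegral.integral_comp_mul_left (fun x => Real.cos x) hK, integral_cos]
    simp [smul_eq_mul]
  have key : SS (a :: L) c = ∑' k : ℕ, (1 / 2) * ∫ t in (c - a)..(c + a), F k t := by
    unfold SS
    apply tsum_congr
    intro k
    rw [hint k]
    have hK : ((k : ℝ) + 1) ≠ 0 := (Kpos k).ne'
    have hsp : sp (a :: L) k = Real.sin (((k : ℝ) + 1) * a) * sp L k := by simp [sp]
    have hlen : (a :: L).length = L.length + 1 := rfl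
    have hsin : Real.sin (((k : ℝ) + 1) * (c + a)) - Real.sin (((k : ℝ) + 1) * (c - a))
        = 2 * Real.cos (((k : ℝ) + 1) * c) * Real.sin (((k : ℝ) + 1) * a) := by
      rw [show ((k : ℝ) + 1) * (c + a) = ((k : ℝ) + 1) * c + ((k : ℝ) + 1) * a by ring,
        show ((k : ℝ) + 1) * (c - a) = ((k : ℝ) + 1) * c - ((k : ℝ) + 1) * a by ring,
        Real.sin_add, Real.sin_sub]
      ring
    rw [hsp, hlen, hsin, pow_succ]
    field_simp
  rw [key, tsum_mul_left, swap]
  congr 1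
lemma mono_step (a : ℝ) (L : List ℝ) (h2 : 2 ≤ L.length) (ha : 0 < a) (ha' : a < π)
    (IH : ∀ c c' : ℝ, 0 ≤ c → c ≤ c' → c' ≤ π → SS L c' ≤ SS L c)
    {c c' : ℝ} (h0 : 0 ≤ c) (hcc : c ≤ c') (hcp : c' ≤ π) :
    SS (a :: L) c' ≤ SS (a :: L) c := by
  have hπ := Real.pi_pos
  have hcont : Continuous (SS L) := SS_cont L h2
  rw [SS_cons a L h2 c, SS_cons a L h2 c']
  have key : ∀ u ∈ Set.Icc c c', SS L (u + a) ≤ SS L (u - a) := by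
    intro u hu
    have hu0 : 0 ≤ u := le_trans h0 hu.1
    have huπ : u ≤ π := le_trans hu.2 hcp
    have heq : SS L (u - a) = SS L |u - a| := by
      rcases le_total a u with h | h
      · rw [abs_of_nonneg (by linarith)]
      · rw [abs_of_nonpos (by linarith)]
        exact (SS_even L (u - a)).symm
    rcases le_total (u + a) π with h | h
    · rw [heq]
      refine IH _ _ (abs_nonneg _) ?_ h
      rcases abs_cases (u - a) with ⟨h', _⟩ | ⟨h', _⟩ <;> linarith
    · have hper : SS L (u + a) = SS L (2 * π - (u + a)) := by
        have h1 := SS_periodic L (u + a - 2 * π)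
        rw [show u + a - 2 * π + 2 * π = u + a by ring] at h1
        have hev := SS_even L (2 * π - (u + a))
        rw [show -(2 * π - (u + a)) = u + a - 2 * π by ring] at hev
        exact h1.trans hev
      rw [hper, heq]
      refine IH _ _ (abs_nonneg _) ?_ (by linarith)
      rcases abs_cases (u - a) with ⟨h', _⟩ | ⟨h', _⟩ <;> linarith
  have i1 : IntervalIntegrable (fun u => SS L (u + a)) MeasureTheory.volume c c' :=
    (hcont.comp (continuous_id.add continuous_const)).intervalIntegrable _ _
  have i2 : IntervalIntegrable (fun u => SS L (u - a)) MeasureTheory.volume c c' :=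
    (hcont.comp (continuous_id.sub continuous_const)).intervalIntegrable _ _
  have hmono : (∫ u in c..c', SS L (u + a)) ≤ ∫ u in c..c', SS L (u - a) :=
    intervalIntegral.integral_mono_on hcc i1 i2 key
  have e1 : (∫ u in c..c', SS L (u + a)) = ∫ t in (c + a)..(c' + a), SS L t :=
    intervalIntegral.integral_comp_add_right (fun t => SS L t) a
  have e2 : (∫ u in c..c', SS L (u - a)) = ∫ t in (c - a)..(c' - a), SS L t :=
    intervalIntegral.integral_comp_sub_right (fun t => SS L t) a
  have A1 : (∫ t in (c - a)..(c' - a), SS L t) + (∫ t in (c' - a)..(c' + a), SS L t)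
      = ∫ t in (c - a)..(c' + a), SS L t :=
    intervalIntegral.integral_add_adjacent_intervals
      (hcont.intervalIntegrable _ _) (hcont.intervalIntegrable _ _)
  have A2 : (∫ t in (c - a)..(c + a), SS L t) + (∫ t in (c + a)..(c' + a), SS L t)
      = ∫ t in (c - a)..(c' + a), SS L t :=
    intervalIntegral.integral_add_adjacent_intervals
      (hcont.intervalIntegrable _ _) (hcont.intervalIntegrable _ _)
  rw [e1, e2] at hmono
  linarith

theorem mono_SS : ∀ (L : List ℝ), (∀ b ∈ L, 0 < b ∧ b < π) → 2 ≤ L.length →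
    ∀ c c' : ℝ, 0 ≤ c → c ≤ c' → c' ≤ π → SS L c' ≤ SS L c := by
  intro L
  induction L with
  | nil => intro _ h; simp at h
  | cons a L ih =>
    intro hs hlen c c' h0 hcc hcp
    have haa := hs a (by simp)
    rcases L with _ | ⟨b, L'⟩
    · simp at hlen
    rcases L' with _ | ⟨e, L''⟩
    · have hbb := hs b (by simp)
      exact mono_base haa.1 haa.2 hbb.1 hbb.2 h0 hcc hcp
    · have htail : ∀ x ∈ (b :: e :: L''), 0 < x ∧ x < π := by
        intro x hx; exact hs x (List.mem_cons_of_mem a hx)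
      have hlen2 : 2 ≤ (b :: e :: L'').length := by simp
      exact mono_step a _ hlen2 haa.1 haa.2
        (fun c c' h1 h2 h3 => ih htail hlen2 c c' h1 h2 h3) h0 hcc hcp
lemma trig_key (A B : ℝ) : Real.sin ((A + B) / 2) ^ 2 - Real.sin A * Real.sin B
    = (1 - Real.cos (A - B)) / 2 := by
  rw [Real.sin_sq_eq_half_sub, show 2 * ((A + B) / 2) = A + B by ring,
    Real.cos_add, Real.cos_sub]
  ring

theorem averaging_step (n : ℕ) (hn : 4 ≤ n) (x : Fin n → ℝ)
    (hx : ∀ i, 0 < x i ∧ x i < π) :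
    ∑' k : ℕ, Real.sin (((k : ℝ) + 1) * x ⟨0, by omega⟩) *
        Real.sin (((k : ℝ) + 1) * x ⟨1, by omega⟩) *
        (∏ i ∈ Finset.univ.filter (fun i : Fin n => 2 ≤ (i : ℕ)),
          Real.sin (((k : ℝ) + 1) * x i)) / ((k : ℝ) + 1) ^ (n - 2) ≤
      ∑' k : ℕ, (Real.sin (((k : ℝ) + 1) * (x ⟨0, by omega⟩ + x ⟨1, by omega⟩) / 2)) ^ 2 *
        (∏ i ∈ Finset.univ.filter (fun i : Fin n => 2 ≤ (i : ℕ)),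
          Real.sin (((k : ℝ) + 1) * x i)) / ((k : ℝ) + 1) ^ (n - 2) := by
  have hπ := Real.pi_pos
  have hx0 := hx ⟨0, by omega⟩
  have hx1 := hx ⟨1, by omega⟩
  set L : List ℝ := List.ofFn (fun j : Fin (n - 2) => x ⟨(j : ℕ) + 2, by omega⟩) with hLdef
  have hlen : L.length = n - 2 := by simp [hLdef]
  have hlen2 : 2 ≤ L.length := by omega
  have hmem : ∀ b ∈ L, 0 < b ∧ b < π := by
    intro b hb
    rw [hLdef, List.mem_ofFn] at hb
    obtain ⟨j, rfl⟩ := hb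
    exact hx _
  have hprod : ∀ k : ℕ,
      (∏ i ∈ Finset.univ.filter (fun i : Fin n => 2 ≤ (i : ℕ)),
        Real.sin (((k : ℝ) + 1) * x i)) = sp L k := by
    intro k
    rw [hLdef]
    unfold sp
    rw [List.map_ofFn, List.prod_ofFn]
    refine Finset.prod_bij'
      (i := fun (a : Fin n) _ => (⟨(a : ℕ) - 2, by
        have := a.isLt; omega⟩ : Fin (n - 2)))
      (j := fun (b : Fin (n - 2)) _ => (⟨(b : ℕ) + 2, by
        have := b.isLt; omega⟩ : Fin n))
      ?_ ?_ ?_ ?_ ?_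
    · intro a _; exact Finset.mem_univ _
    · intro b _
      simp only [Finset.mem_filter, Finset.mem_univ, true_and]
      omega
    · intro a ha
      simp only [Finset.mem_filter, Finset.mem_univ, true_and] at ha
      apply Fin.ext
      simp only []
      omega
    · intro b _
      apply Fin.ext
      simp only []
      omega
    · intro a ha
      simp only [Finset.mem_filter, Finset.mem_univ, true_and] at ha
      refine (congrArg (fun v : Fin n => Real.sin (((k : ℝ) + 1) * x v)) ?_).symm
      apply Fin.ext
      simp only [Fin.val_mk]
      omega
  -- summabilities of both sides
  have hbnd : ∀ (g : ℕ → ℝ), (∀ k, |g k| ≤ 1) →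
      Summable (fun k : ℕ => g k * sp L k / ((k : ℝ) + 1) ^ (n - 2)) := by
    intro g hg
    apply summable_of_bound
    intro k
    have hK := Kpos k
    have hpow : ((k:ℝ)+1) ^ 2 ≤ ((k:ℝ)+1) ^ (n - 2) := pow_le_pow_right₀ (by linarith) (by omega)
    rw [abs_div, abs_of_pos (by positivity : (0:ℝ) < ((k:ℝ)+1) ^ (n-2)), abs_mul]
    calc |g k| * |sp L k| / ((k:ℝ)+1) ^ (n-2)
        ≤ 1 / ((k:ℝ)+1) ^ (n-2) := by
          gcongr
          exact mul_le_one₀ (hg k) (abs_nonneg _) (abs_sp_le L k)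
      _ ≤ 1 / ((k:ℝ)+1) ^ 2 := one_div_le_one_div_of_le (by positivity) hpow
  have hsummL : Summable (fun k : ℕ => Real.sin (((k : ℝ) + 1) * x ⟨0, by omega⟩) *
      Real.sin (((k : ℝ) + 1) * x ⟨1, by omega⟩) *
      (∏ i ∈ Finset.univ.filter (fun i : Fin n => 2 ≤ (i : ℕ)),
        Real.sin (((k : ℝ) + 1) * x i)) / ((k : ℝ) + 1) ^ (n - 2)) := by
    have := hbnd (fun k => Real.sin (((k : ℝ) + 1) * x ⟨0, by omega⟩) *
      Real.sin (((k : ℝ) + 1) * x ⟨1, by omega⟩)) (fun k => by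
        rw [abs_mul]
        exact mul_le_one₀ (abs_le.mpr ⟨Real.neg_one_le_sin _, Real.sin_le_one _⟩)
          (abs_nonneg _) (abs_le.mpr ⟨Real.neg_one_le_sin _, Real.sin_le_one _⟩))
    refine this.congr fun k => ?_
    rw [hprod k]
  have hsummR : Summable (fun k : ℕ =>
      (Real.sin (((k : ℝ) + 1) * (x ⟨0, by omega⟩ + x ⟨1, by omega⟩) / 2)) ^ 2 *
      (∏ i ∈ Finset.univ.filter (fun i : Fin n => 2 ≤ (i : ℕ)),
        Real.sin (((k : ℝ) + 1) * x i)) / ((k : ℝ) + 1) ^ (n - 2)) := by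
    have := hbnd (fun k => (Real.sin (((k : ℝ) + 1) * (x ⟨0, by omega⟩ + x ⟨1, by omega⟩) / 2)) ^ 2)
      (fun k => by
        rw [abs_pow]
        exact pow_le_one₀ (abs_nonneg _)
          (abs_le.mpr ⟨Real.neg_one_le_sin _, Real.sin_le_one _⟩))
    refine this.congr fun k => ?_
    rw [hprod k]
  rw [← sub_nonneg, ← Summable.tsum_sub hsummR hsummL]
  have hterm : ∀ k : ℕ,
      ((Real.sin (((k : ℝ) + 1) * (x ⟨0, by omega⟩ + x ⟨1, by omega⟩) / 2)) ^ 2 *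
        (∏ i ∈ Finset.univ.filter (fun i : Fin n => 2 ≤ (i : ℕ)),
          Real.sin (((k : ℝ) + 1) * x i)) / ((k : ℝ) + 1) ^ (n - 2)
      - Real.sin (((k : ℝ) + 1) * x ⟨0, by omega⟩) *
        Real.sin (((k : ℝ) + 1) * x ⟨1, by omega⟩) *
        (∏ i ∈ Finset.univ.filter (fun i : Fin n => 2 ≤ (i : ℕ)),
          Real.sin (((k : ℝ) + 1) * x i)) / ((k : ℝ) + 1) ^ (n - 2))
      = (sp L k * Real.cos (((k : ℝ) + 1) * (0:ℝ)) / ((k : ℝ) + 1) ^ L.length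
        - sp L k * Real.cos (((k : ℝ) + 1) * (x ⟨0, by omega⟩ - x ⟨1, by omega⟩))
            / ((k : ℝ) + 1) ^ L.length) / 2 := by
    intro k
    rw [hprod k, hlen, mul_zero, Real.cos_zero]
    have tk := trig_key (((k : ℝ) + 1) * x ⟨0, by omega⟩) (((k : ℝ) + 1) * x ⟨1, by omega⟩)
    rw [show (((k : ℝ) + 1) * x ⟨0, by omega⟩ - ((k : ℝ) + 1) * x ⟨1, by omega⟩)
        = ((k : ℝ) + 1) * (x ⟨0, by omega⟩ - x ⟨1, by omega⟩) by ring,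
      show (((k : ℝ) + 1) * x ⟨0, by omega⟩ + ((k : ℝ) + 1) * x ⟨1, by omega⟩) / 2
        = ((k : ℝ) + 1) * (x ⟨0, by omega⟩ + x ⟨1, by omega⟩) / 2 by ring] at tk
    linear_combination (sp L k / ((k : ℝ) + 1) ^ (n - 2)) * tk
  rw [tsum_congr hterm, tsum_div_const,
    Summable.tsum_sub (SS_summable L hlen2 0) (SS_summable L hlen2 (x ⟨0, by omega⟩ - x ⟨1, by omega⟩))]
  have e0 : (∑' k : ℕ, sp L k * Real.cos (((k : ℝ) + 1) * (0:ℝ)) / ((k : ℝ) + 1) ^ L.length)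
      = SS L 0 := rfl
  have e1 : (∑' k : ℕ, sp L k * Real.cos (((k : ℝ) + 1) *
        (x ⟨0, by omega⟩ - x ⟨1, by omega⟩)) / ((k : ℝ) + 1) ^ L.length)
      = SS L (x ⟨0, by omega⟩ - x ⟨1, by omega⟩) := rfl
  rw [e0, e1]
  have he : |x ⟨0, by omega⟩ - x ⟨1, by omega⟩| ≤ π := by
    rcases abs_cases (x ⟨0, by omega⟩ - x ⟨1, by omega⟩) with ⟨h', _⟩ | ⟨h', _⟩ <;>
      rw [h'] <;> linarith [hx0.1, hx0.2, hx1.1, hx1.2]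
  have heq : SS L (x ⟨0, by omega⟩ - x ⟨1, by omega⟩)
      = SS L |x ⟨0, by omega⟩ - x ⟨1, by omega⟩| := by
    rcases le_total 0 (x ⟨0, by omega⟩ - x ⟨1, by omega⟩) with h | h
    · rw [abs_of_nonneg h]
    · rw [abs_of_nonpos h]
      exact (SS_even L _).symm
  have hfin : SS L (x ⟨0, by omega⟩ - x ⟨1, by omega⟩) ≤ SS L 0 := by
    rw [heq]
    exact mono_SS L hmem hlen2 0 _ le_rfl (abs_nonneg _) he
  linarith
end

section
/- Let n ≥ 4 be an integer and let x, y be real numbers with 0 < x ≤ y ≤ π/2. Then Σ_{k=1}^∞ (sin(kx))^n/k^{n−2} ≤ Σ_{k=1}^∞ (sin(ky))^n/k^{n−2}. That is, the function V_n(x) = (2^{n−1}/π)·Σ_{k=1}^∞ (sin(kx))^n/k^{n−2} is non-decreasing on the interval (0, π/2]. -/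
open Real

/- ### Auxiliary lemmas -/

lemma bern2 (x : ℝ) : (Polynomial.map (algebraMap ℚ ℝ) (Polynomial.bernoulli 2)).eval x
    = x^2 - x + 1/6 := by
  simp [Polynomial.bernoulli, Finset.sum_range_succ, bernoulli_one,
    bernoulli_eq_bernoulli'_of_ne_one, bernoulli'_two]
  ring

lemma shift_hasSum {f : ℕ → ℝ} {S : ℝ} (h : HasSum f S) (h0 : f 0 = 0) :
    HasSum (fun n : ℕ => f (n + 1)) S := by
  refine (hasSum_nat_add_iff (f := f) 1).mpr ?_
  simpa [h0] using h

/-- The Fourier series of the Bernoulli polynomial `B₂`: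
`∑ cos((k+1)v)/(k+1)² = π²/6 - πv/2 + v²/4` for `v ∈ [0, 2π]`. -/
lemma cosSum {v : ℝ} (hv0 : 0 ≤ v) (hv1 : v ≤ 2*π) :
    HasSum (fun k : ℕ => Real.cos (((k:ℝ)+1) * v) / ((k:ℝ)+1)^2)
      (π^2/6 - π*v/2 + v^2/4) := by
  have hπ : (0:ℝ) < π := pi_pos
  have hx : v/(2*π) ∈ Set.Icc (0:ℝ) 1 := by
    constructor
    · positivity
    · rw [div_le_one (by positivity)]; linarith
  have h := hasSum_one_div_nat_pow_mul_cos (k := 1) one_ne_zero hx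
  rw [bern2] at h
  have h2 := shift_hasSum h (by norm_num)
  have he : (fun n : ℕ => 1 / ((n+1 : ℕ) : ℝ) ^ (2 * 1) *
      Real.cos (2 * π * ((n+1 : ℕ)) * (v/(2*π))))
      = fun k : ℕ => Real.cos (((k:ℝ)+1) * v) / ((k:ℝ)+1)^2 := by
    funext k
    have : 2 * π * (((k:ℕ)+1 : ℕ)) * (v/(2*π)) = ((k:ℝ)+1) * v := by
      push_cast; field_simp
    rw [this]; push_cast; ring
  rw [he] at h2
  convert h2 using 1
  have : ((2*1).factorial : ℝ) = 2 := by norm_num [Nat.factorial]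
  rw [this]
  field_simp
  ring

lemma cosSum' {c r : ℝ} (hr0 : 0 ≤ r) (hr2 : r ≤ 2*π)
    (hcr : ∀ k : ℕ, Real.cos (((k:ℝ)+1)*c) = Real.cos (((k:ℝ)+1)*r)) :
    HasSum (fun k : ℕ => Real.cos (((k:ℝ)+1) * c) / ((k:ℝ)+1)^2)
      (π^2/6 - π*r/2 + r^2/4) := by
  have h := cosSum hr0 hr2
  have he : (fun k : ℕ => Real.cos (((k:ℝ)+1) * r) / ((k:ℝ)+1)^2)
      = (fun k : ℕ => Real.cos (((k:ℝ)+1) * c) / ((k:ℝ)+1)^2) := by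
    funext k; rw [hcr]
  rwa [he] at h

lemma sin3_mul (θ ψ : ℝ) : Real.sin θ^3 * Real.sin ψ =
    3/8*(Real.cos (ψ - θ) - Real.cos (ψ + θ))
      - 1/8*(Real.cos (ψ - 3*θ) - Real.cos (ψ + 3*θ)) := by
  rw [Real.cos_sub ψ θ, Real.cos_add ψ θ, Real.cos_sub ψ (3*θ), Real.cos_add ψ (3*θ),
    Real.cos_three_mul, Real.sin_three_mul]
  ring

lemma R3_core {t d r1 r2 r3 r4 : ℝ}
    (b10 : 0 ≤ r1) (b12 : r1 ≤ 2*π) (b20 : 0 ≤ r2) (b22 : r2 ≤ 2*π)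
    (b30 : 0 ≤ r3) (b32 : r3 ≤ 2*π) (b40 : 0 ≤ r4) (b42 : r4 ≤ 2*π)
    (h1 : ∀ k : ℕ, Real.cos (((k:ℝ)+1)*(d-t)) = Real.cos (((k:ℝ)+1)*r1))
    (h2 : ∀ k : ℕ, Real.cos (((k:ℝ)+1)*(d+t)) = Real.cos (((k:ℝ)+1)*r2))
    (h3 : ∀ k : ℕ, Real.cos (((k:ℝ)+1)*(d-3*t)) = Real.cos (((k:ℝ)+1)*r3))
    (h4 : ∀ k : ℕ, Real.cos (((k:ℝ)+1)*(d+3*t)) = Real.cos (((k:ℝ)+1)*r4)) :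
    HasSum (fun k : ℕ => Real.sin (((k:ℝ)+1)*t)^3 * Real.sin (((k:ℝ)+1)*d) / ((k:ℝ)+1)^2)
      (3/8*((π^2/6 - π*r1/2 + r1^2/4) - (π^2/6 - π*r2/2 + r2^2/4))
        - 1/8*((π^2/6 - π*r3/2 + r3^2/4) - (π^2/6 - π*r4/2 + r4^2/4))) := by
  have H1 := cosSum' b10 b12 h1
  have H2 := cosSum' b20 b22 h2
  have H3 := cosSum' b30 b32 h3
  have H4 := cosSum' b40 b42 h4
  have HS := ((H1.sub H2).mul_left (3/8)).sub ((H3.sub H4).mul_left (1/8))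
  have he : (fun k : ℕ => 3/8 * (Real.cos (((k:ℝ)+1)*(d-t)) / ((k:ℝ)+1)^2
        - Real.cos (((k:ℝ)+1)*(d+t)) / ((k:ℝ)+1)^2)
      - 1/8 * (Real.cos (((k:ℝ)+1)*(d-3*t)) / ((k:ℝ)+1)^2
        - Real.cos (((k:ℝ)+1)*(d+3*t)) / ((k:ℝ)+1)^2))
      = (fun k : ℕ => Real.sin (((k:ℝ)+1)*t)^3 * Real.sin (((k:ℝ)+1)*d) / ((k:ℝ)+1)^2) := by
    funext k
    have h := sin3_mul (((k:ℝ)+1)*t) (((k:ℝ)+1)*d)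
    have e1 : ((k:ℝ)+1)*d - ((k:ℝ)+1)*t = ((k:ℝ)+1)*(d-t) := by ring
    have e2 : ((k:ℝ)+1)*d + ((k:ℝ)+1)*t = ((k:ℝ)+1)*(d+t) := by ring
    have e3 : ((k:ℝ)+1)*d - 3*(((k:ℝ)+1)*t) = ((k:ℝ)+1)*(d-3*t) := by ring
    have e4 : ((k:ℝ)+1)*d + 3*(((k:ℝ)+1)*t) = ((k:ℝ)+1)*(d+3*t) := by ring
    rw [e1, e2, e3, e4] at h
    rw [h]
    ring
  rwa [he] at HS

lemma cos_neg_arg (a b : ℝ) (k : ℕ) (h : b = -a) :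
    Real.cos (((k:ℝ)+1)*a) = Real.cos (((k:ℝ)+1)*b) := by
  rw [h, show ((k:ℝ)+1)*(-a) = -(((k:ℝ)+1)*a) by ring, Real.cos_neg]

/-- Nonnegativity (with an explicit sum) of `∑ sin³((k+1)t)·sin((k+1)d)/(k+1)²`. -/
lemma R3_nonneg {t d : ℝ} (ht0 : 0 < t) (ht : t ≤ π/2) (hd0 : 0 ≤ d) (hd : d ≤ π) :
    ∃ V, 0 ≤ V ∧
      HasSum (fun k : ℕ => Real.sin (((k:ℝ)+1)*t)^3 * Real.sin (((k:ℝ)+1)*d) / ((k:ℝ)+1)^2) V := by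
  have hπ : (0:ℝ) < π := pi_pos
  have hid : ∀ (c : ℝ), ∀ k : ℕ, Real.cos (((k:ℝ)+1)*c) = Real.cos (((k:ℝ)+1)*c) :=
    fun c k => rfl
  rcases le_total (3*t) d with h3t | h3t
  · refine ⟨_, ?_, R3_core (t := t) (d := d)
      (by linarith) (by linarith) (by linarith) (by linarith)
      (by linarith) (by linarith) (by linarith) (by linarith)
      (hid _) (hid _) (hid _) (hid _)⟩
    nlinarith [sq_nonneg (d - 3*t)]
  · rcases le_total d t with h1t | h1t
    · refine ⟨_, ?_, R3_core (t := t) (d := d) (r1 := t - d) (r3 := 3*t - d)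
        (by linarith) (by linarith) (by linarith) (by linarith)
        (by linarith) (by linarith) (by linarith) (by linarith)
        (fun k => cos_neg_arg _ _ k (by ring)) (hid _)
        (fun k => cos_neg_arg _ _ k (by ring)) (hid _)⟩
      have hV : (3/8*((π^2/6 - π*(t-d)/2 + (t-d)^2/4) - (π^2/6 - π*(d+t)/2 + (d+t)^2/4))
          - 1/8*((π^2/6 - π*(3*t-d)/2 + (3*t-d)^2/4) - (π^2/6 - π*(d+3*t)/2 + (d+3*t)^2/4)))
          = π*d/4 := by ring
      rw [hV]
      have := mul_nonneg hπ.le hd0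
      linarith
    · rcases le_or_gt (d + 3*t) (2*π) with hw | hw
      · refine ⟨_, ?_, R3_core (t := t) (d := d) (r3 := 3*t - d)
          (by linarith) (by linarith) (by linarith) (by linarith)
          (by linarith) (by linarith) (by linarith) (by linarith)
          (hid _) (hid _) (fun k => cos_neg_arg _ _ k (by ring)) (hid _)⟩
        have hV : (3/8*((π^2/6 - π*(d-t)/2 + (d-t)^2/4) - (π^2/6 - π*(d+t)/2 + (d+t)^2/4))
            - 1/8*((π^2/6 - π*(3*t-d)/2 + (3*t-d)^2/4) - (π^2/6 - π*(d+3*t)/2 + (d+3*t)^2/4)))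
            = π*(3*t-d)/8 := by ring
        rw [hV]
        have := mul_nonneg hπ.le (by linarith : (0:ℝ) ≤ 3*t - d)
        linarith
      · have h4 : ∀ k : ℕ, Real.cos (((k:ℝ)+1)*(d+3*t))
            = Real.cos (((k:ℝ)+1)*(d+3*t-2*π)) := by
          intro k
          have h := Real.cos_sub_int_mul_two_pi (((k:ℝ)+1)*(d+3*t)) ((k:ℤ)+1)
          push_cast at h
          rw [show ((k:ℝ)+1)*(d+3*t) - ((k:ℝ)+1)*(2*π)
              = ((k:ℝ)+1)*(d+3*t-2*π) by ring] at h
          exact h.symm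
        refine ⟨_, ?_, R3_core (t := t) (d := d) (r3 := 3*t - d) (r4 := d+3*t-2*π)
          (by linarith) (by linarith) (by linarith) (by linarith)
          (by linarith) (by linarith) (by linarith) (by linarith)
          (hid _) (hid _) (fun k => cos_neg_arg _ _ k (by ring)) h4⟩
        have hV : (3/8*((π^2/6 - π*(d-t)/2 + (d-t)^2/4) - (π^2/6 - π*(d+t)/2 + (d+t)^2/4))
            - 1/8*((π^2/6 - π*(3*t-d)/2 + (3*t-d)^2/4)
              - (π^2/6 - π*(d+3*t-2*π)/2 + (d+3*t-2*π)^2/4)))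
            = π*(π-d)/4 := by ring
        rw [hV]
        have := mul_nonneg hπ.le (by linarith : (0:ℝ) ≤ π - d)
        linarith

lemma summable_inv_pow {q : ℕ} (hq : 2 ≤ q) : Summable (fun k : ℕ => 1/((k:ℝ)+1)^q) := by
  have h := (summable_nat_add_iff (f := fun n : ℕ => 1/(n:ℝ)^q) 1).mpr
    (Real.summable_one_div_nat_pow.mpr hq)
  have he : (fun n : ℕ => 1/((n + 1 : ℕ):ℝ)^q) = (fun k : ℕ => 1/((k:ℝ)+1)^q) := by
    funext k; push_cast; ring
  rwa [he] at h

lemma abs_term_le (P Q : ℕ) (c1 c2 : ℝ) (k : ℕ) :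
    |Real.sin c1^P * Real.sin c2 / ((k:ℝ)+1)^Q| ≤ 1/((k:ℝ)+1)^Q := by
  have hk : (0:ℝ) < ((k:ℝ)+1)^Q := by positivity
  rw [abs_div, abs_of_pos hk, div_le_div_iff₀ hk hk]
  have h1 : |Real.sin c1^P * Real.sin c2| ≤ 1 := by
    rw [abs_mul, abs_pow]
    have := Real.abs_sin_le_one c1
    have := Real.abs_sin_le_one c2
    have h2 : |Real.sin c1|^P ≤ 1 := pow_le_one₀ (abs_nonneg _) ‹|Real.sin c1| ≤ 1›
    nlinarith [abs_nonneg (Real.sin c1^P), abs_nonneg (Real.sin c2)]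
  nlinarith

lemma tsum_intervalIntegral_swap {a b : ℝ} {F : ℕ → ℝ → ℝ} (hF : ∀ k, Continuous (F k))
    {c : ℕ → ℝ} (hbd : ∀ k x, |F k x| ≤ c k) (hc : Summable c) :
    ∑' k : ℕ, ∫ e in a..b, F k e = ∫ e in a..b, ∑' k : ℕ, F k e := by
  refine intervalIntegral.tsum_intervalIntegral_eq_of_summable_norm
    (f := fun k => ⟨F k, hF k⟩) ?_
  refine hc.of_nonneg_of_le (fun k => norm_nonneg _) (fun k => ?_)
  have h0 : 0 ≤ c k := le_trans (abs_nonneg _) (hbd k 0)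
  rw [ContinuousMap.norm_le _ h0]
  intro x
  simpa using hbd k x

lemma integral_sin_mul {c : ℝ} (hc : c ≠ 0) (a b : ℝ) :
    ∫ e in a..b, Real.sin (c * e) = (Real.cos (c*a) - Real.cos (c*b))/c := by
  rw [intervalIntegral.integral_comp_mul_left (fun x => Real.sin x) hc, integral_sin,
    smul_eq_mul]
  field_simp

lemma two_sin_sin (θ ψ : ℝ) :
    Real.cos (ψ - θ) - Real.cos (ψ + θ) = 2 * Real.sin θ * Real.sin ψ := by
  rw [Real.cos_sub, Real.cos_add]; ring

/-- Key positivity: `∑ sin((k+1)t)^(p+3)·sin((k+1)d)/(k+1)^(p+2) ≥ 0`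
for `0 < t ≤ π/2` and `0 ≤ d ≤ π`. -/
lemma R_nonneg (p : ℕ) : ∀ t d : ℝ, 0 < t → t ≤ π/2 → 0 ≤ d → d ≤ π →
    0 ≤ ∑' k : ℕ, Real.sin (((k:ℝ)+1)*t)^(p+3) * Real.sin (((k:ℝ)+1)*d) / ((k:ℝ)+1)^(p+2) := by
  induction p with
  | zero =>
    intro t d ht0 ht hd0 hd
    obtain ⟨V, hV0, hV⟩ := R3_nonneg ht0 ht hd0 hd
    simpa [hV.tsum_eq] using hV0
  | succ p ih =>
    intro t d ht0 ht hd0 hd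
    have hπ : (0:ℝ) < π := pi_pos
    set a := |d - t| with ha
    set b := (if d + t ≤ π then d + t else 2*π - (d+t)) with hb
    have ha0 : 0 ≤ a := abs_nonneg _
    have hbπ : b ≤ π := by
      rw [hb]; split_ifs with h
      · exact h
      · linarith
    have hab : a ≤ b := by
      rw [ha, hb]
      split_ifs with h
      · rw [abs_le]; constructor <;> linarith
      · rw [abs_le]; constructor <;> linarith
    have hterm : ∀ k : ℕ,
        Real.sin (((k:ℝ)+1)*t)^(p+1+3) * Real.sin (((k:ℝ)+1)*d) / ((k:ℝ)+1)^(p+1+2)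
        = ∫ e in a..b,
            (1/2) * (Real.sin (((k:ℝ)+1)*t)^(p+3) * Real.sin (((k:ℝ)+1)*e) / ((k:ℝ)+1)^(p+2)) := by
      intro k
      have hK : (0:ℝ) < (k:ℝ)+1 := by positivity
      have hint : (fun e => (1/2) * (Real.sin (((k:ℝ)+1)*t)^(p+3) * Real.sin (((k:ℝ)+1)*e)
          / ((k:ℝ)+1)^(p+2)))
          = fun e => ((1/2) * (Real.sin (((k:ℝ)+1)*t)^(p+3) / ((k:ℝ)+1)^(p+2)))
              * Real.sin (((k:ℝ)+1)*e) := by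
        funext e; ring
      rw [hint, intervalIntegral.integral_const_mul, integral_sin_mul (ne_of_gt hK)]
      have hca : Real.cos (((k:ℝ)+1)*a) = Real.cos (((k:ℝ)+1)*(d - t)) := by
        rw [ha, show ((k:ℝ)+1) * |d - t| = |((k:ℝ)+1)*(d-t)| by
          rw [abs_mul, abs_of_pos hK], Real.cos_abs]
      have hcb : Real.cos (((k:ℝ)+1)*b) = Real.cos (((k:ℝ)+1)*(d + t)) := by
        rw [hb]; split_ifs with h
        · rfl
        · have hp := Real.cos_sub_int_mul_two_pi (((k:ℝ)+1)*(d+t)) ((k:ℤ)+1)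
          push_cast at hp
          rw [show ((k:ℝ)+1)*(2*π - (d+t)) = -(((k:ℝ)+1)*(d+t) - ((k:ℝ)+1)*(2*π)) by ring,
            Real.cos_neg, hp]
      rw [hca, hcb]
      have h2ss := two_sin_sin (((k:ℝ)+1)*t) (((k:ℝ)+1)*d)
      rw [show ((k:ℝ)+1)*d - ((k:ℝ)+1)*t = ((k:ℝ)+1)*(d-t) by ring,
        show ((k:ℝ)+1)*d + ((k:ℝ)+1)*t = ((k:ℝ)+1)*(d+t) by ring] at h2ss
      rw [h2ss]
      have hKp : ((k:ℝ)+1)^(p+1+2) = ((k:ℝ)+1)^(p+2) * ((k:ℝ)+1) := by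
        rw [← pow_succ]
      rw [hKp]
      rw [pow_succ (Real.sin (((k:ℝ)+1)*t)) (p+2)]
      field_simp
      ring
    rw [tsum_congr hterm]
    rw [tsum_intervalIntegral_swap
      (fun k => by fun_prop)
      (fun k e => ?_) (summable_inv_pow (le_refl 2))]
    · refine intervalIntegral.integral_nonneg hab (fun e he => ?_)
      have h0e : 0 ≤ e := le_trans ha0 he.1
      have heπ : e ≤ π := le_trans he.2 hbπ
      rw [tsum_mul_left]
      have := ih t e ht0 ht h0e heπ
      linarith
    · have h1 := abs_term_le (p+3) (p+2) (((k:ℝ)+1)*t) (((k:ℝ)+1)*e) k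
      have hK1 : (1:ℝ) ≤ (k:ℝ)+1 := by linarith [Nat.cast_nonneg (α := ℝ) k]
      have hmono : ((k:ℝ)+1)^2 ≤ ((k:ℝ)+1)^(p+2) := by
        apply pow_le_pow_right₀ hK1; omega
      have hpos2 : (0:ℝ) < ((k:ℝ)+1)^2 := by positivity
      have hle : 1/((k:ℝ)+1)^(p+2) ≤ 1/((k:ℝ)+1)^2 :=
        one_div_le_one_div_of_le hpos2 hmono
      rw [abs_mul]
      have habs2 : |(1:ℝ)/2| = 1/2 := by norm_num
      rw [habs2]
      nlinarith [abs_nonneg (Real.sin (((k:ℝ)+1)*t)^(p+3) * Real.sin (((k:ℝ)+1)*e) / ((k:ℝ)+1)^(p+2))]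

lemma pow_bound_le {p : ℕ} (k : ℕ) : 1/((k:ℝ)+1)^(p+2) ≤ 1/((k:ℝ)+1)^2 := by
  have hK1 : (1:ℝ) ≤ (k:ℝ)+1 := by linarith [Nat.cast_nonneg (α := ℝ) k]
  have hmono : ((k:ℝ)+1)^2 ≤ ((k:ℝ)+1)^(p+2) := by
    apply pow_le_pow_right₀ hK1; omega
  exact one_div_le_one_div_of_le (by positivity) hmono

lemma summable_of_bound_s14 {Q : ℕ} (hQ : 2 ≤ Q) {g : ℕ → ℝ}
    (h : ∀ k, |g k| ≤ 1/((k:ℝ)+1)^Q) : Summable g :=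
  Summable.of_abs ((summable_inv_pow hQ).of_nonneg_of_le (fun k => abs_nonneg _) h)

lemma sin4_ident (θ : ℝ) : Real.sin θ^4
    = 3/8 - 1/2 * Real.cos (2*θ) + 1/8 * Real.cos (2*(2*θ)) := by
  rw [Real.cos_two_mul (2*θ), Real.cos_two_mul θ]
  linear_combination (Real.sin θ^2 + 1 - Real.cos θ^2) * (Real.sin_sq_add_cos_sq θ)

lemma f4_hasSum {x : ℝ} (hx0 : 0 ≤ x) (hx : x ≤ π/2) :
    HasSum (fun k : ℕ => Real.sin (((k:ℝ)+1)*x)^4 / ((k:ℝ)+1)^2) (π*x/4) := by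
  have hπ : (0:ℝ) < π := pi_pos
  have H0 := cosSum (v := 0) le_rfl (by linarith)
  have H2 := cosSum (v := 2*x) (by linarith) (by linarith)
  have H4 := cosSum (v := 4*x) (by linarith) (by linarith)
  have HS := ((H0.mul_left (3/8)).sub (H2.mul_left (1/2))).add (H4.mul_left (1/8))
  have he : (fun k : ℕ => 3/8 * (Real.cos (((k:ℝ)+1)*0) / ((k:ℝ)+1)^2)
      - 1/2 * (Real.cos (((k:ℝ)+1)*(2*x)) / ((k:ℝ)+1)^2)
      + 1/8 * (Real.cos (((k:ℝ)+1)*(4*x)) / ((k:ℝ)+1)^2))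
      = fun k : ℕ => Real.sin (((k:ℝ)+1)*x)^4 / ((k:ℝ)+1)^2 := by
    funext k
    rw [mul_zero, Real.cos_zero,
      show ((k:ℝ)+1)*(2*x) = 2*(((k:ℝ)+1)*x) by ring,
      show ((k:ℝ)+1)*(4*x) = 2*(2*(((k:ℝ)+1)*x)) by ring,
      sin4_ident (((k:ℝ)+1)*x)]
    ring
  rw [he] at HS
  have hv : 3 / 8 * (π ^ 2 / 6 - π * 0 / 2 + 0 ^ 2 / 4) - 1 / 2 * (π ^ 2 / 6 - π * (2 * x) / 2 + (2 * x) ^ 2 / 4) +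
      1 / 8 * (π ^ 2 / 6 - π * (4 * x) / 2 + (4 * x) ^ 2 / 4) = π*x/4 := by ring
  rwa [hv] at HS

theorem V_n_monotone_left (n : ℕ) (hn : 4 ≤ n) (x y : ℝ)
    (hx : 0 < x) (hxy : x ≤ y) (hy : y ≤ π / 2) :
    ∑' k : ℕ, (Real.sin (((k : ℝ) + 1) * x)) ^ n / ((k : ℝ) + 1) ^ (n - 2) ≤
      ∑' k : ℕ, (Real.sin (((k : ℝ) + 1) * y)) ^ n / ((k : ℝ) + 1) ^ (n - 2) := by
  have hπ : (0:ℝ) < π := pi_pos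
  rcases eq_or_lt_of_le hn with h4 | h5
  · rw [← h4]
    have hfx := (f4_hasSum hx.le (le_trans hxy hy)).tsum_eq
    have hfy := (f4_hasSum (le_trans hx.le hxy) hy).tsum_eq
    norm_num at hfx hfy ⊢
    rw [hfx, hfy]
    nlinarith
  · obtain ⟨N, rfl⟩ : ∃ N, n = N + 5 := ⟨n - 5, by omega⟩
    have hexp : N + 5 - 2 = N + 3 := by omega
    rw [hexp]
    set G : ℕ → ℝ → ℝ := fun k t => Real.sin (((k:ℝ)+1)*t)^(N+5) / ((k:ℝ)+1)^(N+3) with hG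
    have habs : ∀ (t : ℝ) k, |G k t| ≤ 1/((k:ℝ)+1)^(N+3) := by
      intro t k
      have h := abs_term_le (N+4) (N+3) (((k:ℝ)+1)*t) (((k:ℝ)+1)*t) k
      rw [← pow_succ] at h
      exact h
    have hsx : Summable (fun k => G k x) := summable_of_bound_s14 (by omega) (habs x)
    have hsy : Summable (fun k => G k y) := summable_of_bound_s14 (by omega) (habs y)
    rw [← sub_nonneg, ← Summable.tsum_sub hsy hsx]
    set D : ℕ → ℝ → ℝ := fun k t => (((N:ℝ)+5)/2) *
      (Real.sin (((k:ℝ)+1)*t)^(N+3) * Real.sin (((k:ℝ)+1)*(2*t)) / ((k:ℝ)+1)^(N+2)) with hD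
    have hder : ∀ (k : ℕ) (t : ℝ), HasDerivAt (G k) (D k t) t := by
      intro k t
      have hK : (0:ℝ) < (k:ℝ)+1 := by positivity
      have h1 : HasDerivAt (fun u : ℝ => ((k:ℝ)+1) * u) (((k:ℝ)+1) * 1) t :=
        (hasDerivAt_id t).const_mul ((k:ℝ)+1)
      have h2 : HasDerivAt (fun u : ℝ => Real.sin (((k:ℝ)+1)*u))
          (Real.cos (((k:ℝ)+1)*t) * (((k:ℝ)+1) * 1)) t :=
        (Real.hasDerivAt_sin (((k:ℝ)+1)*t)).comp t h1
      have h3 := (h2.pow (N+5)).div_const (((k:ℝ)+1)^(N+3))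
      convert h3 using 1
      · rfl
      · rfl
      · rfl
      have hs2 : Real.sin (((k:ℝ)+1)*(2*t))
          = 2 * Real.sin (((k:ℝ)+1)*t) * Real.cos (((k:ℝ)+1)*t) := by
        rw [show ((k:ℝ)+1)*(2*t) = 2*(((k:ℝ)+1)*t) by ring, Real.sin_two_mul]
      rw [hD]
      simp only []
      rw [hs2, show N+5-1 = N+4 by omega]
      have e1 : ((k:ℝ)+1)^(N+3) = ((k:ℝ)+1)^(N+2) * ((k:ℝ)+1) := by rw [← pow_succ]
      have e2 : Real.sin (((k:ℝ)+1)*t)^(N+4)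
          = Real.sin (((k:ℝ)+1)*t)^(N+3) * Real.sin (((k:ℝ)+1)*t) := by
        rw [← pow_succ]
      rw [e1, e2]
      push_cast
      field_simp
    have hftc : ∀ k : ℕ, G k y - G k x = ∫ t in x..y, D k t := by
      intro k
      rw [intervalIntegral.integral_eq_sub_of_hasDerivAt
        (fun t _ => hder k t) ((Continuous.intervalIntegrable (by fun_prop) x y))]
    have hswap : ∑' k : ℕ, (G k y - G k x) = ∫ t in x..y, ∑' k : ℕ, D k t := by
      rw [tsum_congr hftc]
      apply tsum_intervalIntegral_swap (fun k => by fun_prop)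
        (c := fun k => (((N:ℝ)+5)/2) * (1/((k:ℝ)+1)^2))
        (fun k t => ?_) ((summable_inv_pow (le_refl 2)).mul_left _)
      · rw [hD]
        simp only []
        rw [abs_mul, abs_of_pos (by positivity : (0:ℝ) < ((N:ℝ)+5)/2)]
        have h1 := abs_term_le (N+3) (N+2) (((k:ℝ)+1)*t) (((k:ℝ)+1)*(2*t)) k
        have h2 := pow_bound_le (p := N) k
        have h3 : (0:ℝ) < ((N:ℝ)+5)/2 := by positivity
        nlinarith [abs_nonneg (Real.sin (((k:ℝ)+1)*t)^(N+3)
          * Real.sin (((k:ℝ)+1)*(2*t)) / ((k:ℝ)+1)^(N+2))]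
    rw [hswap]
    apply intervalIntegral.integral_nonneg hxy
    intro t ht
    have ht0 : 0 < t := lt_of_lt_of_le hx ht.1
    have htπ : t ≤ π/2 := le_trans ht.2 hy
    rw [tsum_mul_left]
    have hR := R_nonneg N t (2*t) ht0 htπ (by linarith) (by linarith)
    have h3 : (0:ℝ) ≤ ((N:ℝ)+5)/2 := by positivity
    exact mul_nonneg h3 hR
end

section
/- Let n ≥ 4 be an integer and let x, y be real numbers with π/2 ≤ x ≤ y < π. Then Σ_{k=1}^∞ (sin(kx))^n/k^{n−2} ≥ Σ_{k=1}^∞ (sin(ky))^n/k^{n−2}. That is, the function V_n(x) = (2^{n−1}/π)·Σ_{k=1}^∞ (sin(kx))^n/k^{n−2} is non-increasing on the interval [π/2, π). -/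
open Real MeasureTheory

noncomputable section VnAux

def Pf (θ : ℝ) : ℝ := π^2/6 - π*θ/2 + θ^2/4

def Wf (c w : ℝ) : ℝ := (c + w - π)^2 + (π - |c - w|)^2

lemma summable_aux {f : ℕ → ℝ} (C : ℝ) (h : ∀ k : ℕ, |f k| ≤ C / ((k:ℝ)+1)^2) :
    Summable f := by
  have base : Summable (fun k : ℕ => C / ((k:ℝ)+1)^2) := by
    have h1 : Summable (fun n : ℕ => 1 / (n:ℝ)^2) :=
      Real.summable_one_div_nat_pow.mpr one_lt_two
    have h2 : Summable (fun k : ℕ => 1 / ((k:ℝ)+1)^2) := by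
      have := (summable_nat_add_iff (f := fun n : ℕ => 1 / (n:ℝ)^2) 1).mpr h1
      simpa using this
    simpa [div_eq_mul_inv, mul_comm, mul_assoc] using h2.mul_left C
  exact Summable.of_abs (base.of_nonneg_of_le (fun k => abs_nonneg _) h)

lemma bern2_s15 : (bernoulli 2 : ℚ) = 1/6 := by
  rw [bernoulli_eq_bernoulli'_of_ne_one (by norm_num), bernoulli'_two]

lemma hasSum_P {θ : ℝ} (h0 : 0 ≤ θ) (h1 : θ ≤ 2*π) :
    HasSum (fun k : ℕ => Real.cos (((k:ℝ)+1)*θ) / ((k:ℝ)+1)^2) (Pf θ) := by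
  have hπ : (π:ℝ) ≠ 0 := Real.pi_ne_zero
  have hx : θ/(2*π) ∈ Set.Icc (0:ℝ) 1 := by
    constructor
    · positivity
    · rw [div_le_one (by positivity)]; exact h1
  have H := hasSum_one_div_nat_pow_mul_cos (k := 1) one_ne_zero hx
  have hb : (Polynomial.map (algebraMap ℚ ℝ) (Polynomial.bernoulli (2*1))).eval (θ/(2*π))
      = (θ/(2*π))^2 - (θ/(2*π)) + 1/6 := by
    have hp : Polynomial.bernoulli 2 = Polynomial.monomial 2 (1:ℚ) - Polynomial.monomial 1 1
        + Polynomial.C (1/6) := by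
      norm_num [Polynomial.bernoulli, Finset.sum_range_succ, bernoulli_one, bernoulli_zero, bern2_s15]
      rw [sub_eq_add_neg]
    norm_num [hp]
  have hval : ((-1 : ℝ)) ^ (1 + 1) * (2 * π) ^ (2 * 1) / 2 / (Nat.factorial (2 * 1) : ℝ) *
      (Polynomial.map (algebraMap ℚ ℝ) (Polynomial.bernoulli (2*1))).eval (θ/(2*π)) = Pf θ := by
    rw [hb]
    simp only [Nat.factorial, Pf]
    push_cast
    field_simp
    ring
  rw [hval] at H
  have H3 := (hasSum_nat_add_iff
    (f := fun n : ℕ => 1 / ((n:ℝ)) ^ (2*1) * Real.cos (2 * π * n * (θ/(2*π)))) 1).mpr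
    (by simpa using H)
  refine H3.congr_fun fun k => ?_
  push_cast
  rw [show 2 * π * ((k:ℝ)+1) * (θ/(2*π)) = ((k:ℝ)+1) * θ by field_simp]
  ring


lemma hasSum_P_of {arg rep : ℝ} (h : ∀ k : ℕ, Real.cos (((k:ℝ)+1)*arg) = Real.cos (((k:ℝ)+1)*rep))
    (h0 : 0 ≤ rep) (h1 : rep ≤ 2*π) :
    HasSum (fun k : ℕ => Real.cos (((k:ℝ)+1)*arg) / ((k:ℝ)+1)^2) (Pf rep) :=
  (hasSum_P h0 h1).congr_fun fun k => by rw [h k]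

lemma cos_shift_down (θ : ℝ) (k : ℕ) :
    Real.cos (((k:ℝ)+1)*θ) = Real.cos (((k:ℝ)+1)*(θ - 2*π)) := by
  rw [show ((k:ℝ)+1)*θ = ((k:ℝ)+1)*(θ - 2*π) + ((k+1 : ℕ) : ℝ) * (2*π) by push_cast; ring]
  exact (Real.cos_add_nat_mul_two_pi _ _)

lemma cos_reflect (θ : ℝ) (k : ℕ) :
    Real.cos (((k:ℝ)+1)*θ) = Real.cos (((k:ℝ)+1)*(-θ)) := by
  rw [show ((k:ℝ)+1)*(-θ) = -(((k:ℝ)+1)*θ) by ring, Real.cos_neg]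

/-- key evaluation : `∑ (cos(K(c+w)) + cos(K(c-w)))/K² = Wf c (min w (2π-w))/4 - π²/6`
for `c ∈ [0,π]`, `w ∈ [0,2π]`. -/
lemma pair_P {c w : ℝ} (hc0 : 0 ≤ c) (hcπ : c ≤ π) (hw0 : 0 ≤ w) (hw2 : w ≤ 2*π) :
    HasSum (fun k : ℕ => (Real.cos (((k:ℝ)+1)*(c+w)) + Real.cos (((k:ℝ)+1)*(c-w))) / ((k:ℝ)+1)^2)
      (Wf c (min w (2*π - w)) / 4 - π^2/6) := by
  have hπ := Real.pi_pos
  rcases le_total w π with hwπ | hwπ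
  · -- min = w
    have hmin : min w (2*π - w) = w := min_eq_left (by linarith)
    rw [hmin]
    have h₁ : HasSum (fun k : ℕ => Real.cos (((k:ℝ)+1)*(c+w)) / ((k:ℝ)+1)^2) (Pf (c+w)) :=
      hasSum_P (by linarith) (by linarith)
    rcases le_total w c with hwc | hwc
    · -- c - w ≥ 0
      have h₂ : HasSum (fun k : ℕ => Real.cos (((k:ℝ)+1)*(c-w)) / ((k:ℝ)+1)^2) (Pf (c-w)) :=
        hasSum_P (by linarith) (by linarith)
      have heq : Pf (c+w) + Pf (c-w) = Wf c w / 4 - π^2/6 := by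
        unfold Pf Wf; rw [abs_of_nonneg (by linarith : (0:ℝ) ≤ c - w)]; ring
      rw [← heq]
      exact (h₁.add h₂).congr_fun fun k => by ring
    · have h₂ : HasSum (fun k : ℕ => Real.cos (((k:ℝ)+1)*(c-w)) / ((k:ℝ)+1)^2) (Pf (w-c)) :=
        hasSum_P_of (fun k => by rw [cos_reflect]; ring_nf) (by linarith) (by linarith)
      have heq : Pf (c+w) + Pf (w-c) = Wf c w / 4 - π^2/6 := by
        unfold Pf Wf; rw [abs_of_nonpos (by linarith : c - w ≤ (0:ℝ))]; ring
      rw [← heq]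
      exact (h₁.add h₂).congr_fun fun k => by ring
  · have hmin : min w (2*π - w) = 2*π - w := min_eq_right (by linarith)
    rw [hmin]
    have h₂ : HasSum (fun k : ℕ => Real.cos (((k:ℝ)+1)*(c-w)) / ((k:ℝ)+1)^2) (Pf (w-c)) :=
      hasSum_P_of (fun k => by rw [cos_reflect]; ring_nf) (by linarith) (by linarith)
    rcases le_total (c+w) (2*π) with hcw | hcw
    · have h₁ : HasSum (fun k : ℕ => Real.cos (((k:ℝ)+1)*(c+w)) / ((k:ℝ)+1)^2) (Pf (c+w)) :=
        hasSum_P (by linarith) (by linarith)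
      have heq : Pf (c+w) + Pf (w-c) = Wf c (2*π - w) / 4 - π^2/6 := by
        unfold Pf Wf; rw [abs_of_nonpos (by linarith : c - (2*π - w) ≤ (0:ℝ))]; ring
      rw [← heq]
      exact (h₁.add h₂).congr_fun fun k => by ring
    · have h₁ : HasSum (fun k : ℕ => Real.cos (((k:ℝ)+1)*(c+w)) / ((k:ℝ)+1)^2) (Pf (c+w-2*π)) :=
        hasSum_P_of (fun k => cos_shift_down _ k) (by linarith) (by linarith)
      have heq : Pf (c+w-2*π) + Pf (w-c) = Wf c (2*π - w) / 4 - π^2/6 := by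
        unfold Pf Wf; rw [abs_of_nonneg (by linarith : (0:ℝ) ≤ c - (2*π - w))]; ring
      rw [← heq]
      exact (h₁.add h₂).congr_fun fun k => by ring


lemma Wmono {a b c₁ c₂ : ℝ} (hb : 0 ≤ b) (hba : b ≤ a) (ha : a ≤ π)
    (h0 : 0 ≤ c₁) (h12 : c₁ ≤ c₂) (h2 : c₂ ≤ π) :
    Wf c₁ a - Wf c₁ b ≤ Wf c₂ a - Wf c₂ b := by
  have hπ := Real.pi_pos
  have key : ∀ c, 0 ≤ c → c ≤ π →
      Wf c a - Wf c b = 2*(a-b)*(a+b-2*π) + 4*π*(min (max c b) a - b) := by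
    intro c hc0 hcπ
    rcases le_total c b with h | h
    · rw [max_eq_right h, min_eq_left hba]
      unfold Wf
      rw [abs_of_nonpos (by linarith : c - a ≤ 0), abs_of_nonpos (by linarith : c - b ≤ 0)]
      ring
    · rcases le_total c a with h' | h'
      · rw [max_eq_left h, min_eq_left h']
        unfold Wf
        rw [abs_of_nonpos (by linarith : c - a ≤ 0), abs_of_nonneg (by linarith : 0 ≤ c - b)]
        ring
      · rw [max_eq_left h, min_eq_right h']
        unfold Wf
        rw [abs_of_nonneg (by linarith : 0 ≤ c - a), abs_of_nonneg (by linarith : 0 ≤ c - b)]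
        ring
  rw [key c₁ h0 (le_trans h12 h2), key c₂ (le_trans h0 h12) h2]
  have hmm : min (max c₁ b) a ≤ min (max c₂ b) a :=
    min_le_min (max_le_max h12 (le_refl b)) (le_refl a)
  nlinarith [Real.pi_pos]

/-- product of sines over a list of slot values -/
def sprod (L : List ℝ) (k : ℕ) : ℝ := (L.map (fun r => Real.sin (((k:ℝ)+1) * r))).prod

/-- the master function -/
def Tt (L : List ℝ) (c : ℝ) : ℝ :=
  ∑' k : ℕ, (1 - Real.cos (((k:ℝ)+1)*c)) * sprod L k / ((k:ℝ)+1)^L.length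

lemma sprod_abs_le_one (L : List ℝ) (k : ℕ) : |sprod L k| ≤ 1 := by
  induction L with
  | nil => simp [sprod]
  | cons r L ih =>
    have : sprod (r :: L) k = Real.sin (((k:ℝ)+1)*r) * sprod L k := by
      simp [sprod]
    rw [this, abs_mul]
    calc |Real.sin (((k:ℝ)+1)*r)| * |sprod L k| ≤ 1 * 1 :=
          mul_le_mul (Real.abs_sin_le_one _) ih (abs_nonneg _) zero_le_one
      _ = 1 := by ring

lemma sprod_cons (r : ℝ) (L : List ℝ) (k : ℕ) :
    sprod (r :: L) k = Real.sin (((k:ℝ)+1)*r) * sprod L k := by simp [sprod]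

lemma one_le_Kp (k : ℕ) : (1:ℝ) ≤ (k:ℝ)+1 := by have := Nat.cast_nonneg (α := ℝ) k; linarith

lemma pow_K_le (k : ℕ) {m n : ℕ} (h : m ≤ n) : ((k:ℝ)+1)^m ≤ ((k:ℝ)+1)^n :=
  pow_le_pow_right₀ (one_le_Kp k) h

/-- generic bound for all the term shapes we use -/
lemma term_bound {g : ℕ → ℝ} (hg : ∀ k, |g k| ≤ 2) (L : List ℝ) (h2 : 2 ≤ L.length) (k : ℕ) :
    |g k * sprod L k / ((k:ℝ)+1)^L.length| ≤ 2 / ((k:ℝ)+1)^2 := by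
  have hK : (0:ℝ) < (k:ℝ)+1 := by positivity
  rw [abs_div, abs_mul, abs_of_nonneg (by positivity : (0:ℝ) ≤ ((k:ℝ)+1)^L.length)]
  have h1 : |g k * sprod L k| ≤ 2 := by
    rw [abs_mul]
    calc |g k| * |sprod L k| ≤ 2 * 1 :=
        mul_le_mul (hg k) (sprod_abs_le_one L k) (abs_nonneg _) (by norm_num)
      _ = 2 := by ring
    
  calc |g k| * |sprod L k| / ((k:ℝ)+1)^L.length ≤ 2 / ((k:ℝ)+1)^L.length := by
        gcongr
        rw [← abs_mul]; exact h1
      _ ≤ 2 / ((k:ℝ)+1)^2 := by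
        gcongr
        exact one_le_Kp k


end VnAux

noncomputable section VnAux4

lemma abs_one_sub_cos_le (t : ℝ) : |1 - Real.cos t| ≤ 2 := by
  have h1 := Real.cos_le_one t
  have h2 := Real.neg_one_le_cos t
  rw [abs_le]; constructor <;> linarith

lemma summable_T (L : List ℝ) (h2 : 2 ≤ L.length) (c : ℝ) :
    Summable (fun k : ℕ => (1 - Real.cos (((k:ℝ)+1)*c)) * sprod L k / ((k:ℝ)+1)^L.length) :=
  summable_aux 2 (fun k =>
    term_bound (g := fun k => 1 - Real.cos (((k:ℝ)+1)*c))
      (fun k => abs_one_sub_cos_le _) L h2 k)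

lemma Tt_even (L : List ℝ) (c : ℝ) : Tt L (-c) = Tt L c := by
  unfold Tt
  exact tsum_congr fun k => by
    rw [show ((k:ℝ)+1)*(-c) = -(((k:ℝ)+1)*c) by ring, Real.cos_neg]

lemma Tt_shift (L : List ℝ) (c : ℝ) : Tt L (c + 2*π) = Tt L c := by
  unfold Tt
  exact tsum_congr fun k => by
    rw [cos_shift_down (c + 2*π) k, show c + 2*π - 2*π = c by ring]

lemma Tt_perm {L L' : List ℝ} (h : L.Perm L') (c : ℝ) : Tt L c = Tt L' c := by
  unfold Tt
  exact tsum_congr fun k => by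
    rw [show sprod L k = sprod L' k from (h.map _).prod_eq, h.length_eq]

lemma base_hasSum (r₁ r₂ c : ℝ) (h₂0 : 0 < r₂) (h₂₁ : r₂ ≤ r₁) (h₁π : r₁ < π)
    (hc0 : 0 ≤ c) (hcπ : c ≤ π) :
    HasSum (fun k : ℕ => (1 - Real.cos (((k:ℝ)+1)*c)) * sprod [r₁,r₂] k / ((k:ℝ)+1)^([r₁,r₂].length))
      ((1/2)*Pf (r₁-r₂) - (1/2)*Pf (r₁+r₂)
        + (Wf c (min (r₁+r₂) (2*π-(r₁+r₂))) - Wf c (r₁-r₂))/16) := by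
  have hπ := Real.pi_pos
  have HB : HasSum (fun k : ℕ => Real.cos (((k:ℝ)+1)*(r₁-r₂)) / ((k:ℝ)+1)^2) (Pf (r₁-r₂)) :=
    hasSum_P (by linarith) (by linarith)
  have HS : HasSum (fun k : ℕ => Real.cos (((k:ℝ)+1)*(r₁+r₂)) / ((k:ℝ)+1)^2) (Pf (r₁+r₂)) :=
    hasSum_P (by linarith) (by linarith)
  have HPB := pair_P (w := r₁-r₂) hc0 hcπ (by linarith) (by linarith)
  have HPS := pair_P (w := r₁+r₂) hc0 hcπ (by linarith) (by linarith)
  rw [min_eq_left (by linarith : r₁-r₂ ≤ 2*π - (r₁-r₂))] at HPB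
  have comb := (((HB.mul_left (1/2)).sub (HS.mul_left (1/2))).sub (HPB.mul_left (1/4))).add
    (HPS.mul_left (1/4))
  have hval : (1/2) * Pf (r₁-r₂) - (1/2) * Pf (r₁+r₂)
      - (1/4) * (Wf c (r₁-r₂) / 4 - π^2/6) + (1/4) * (Wf c (min (r₁+r₂) (2*π-(r₁+r₂))) / 4 - π^2/6)
      = (1/2)*Pf (r₁-r₂) - (1/2)*Pf (r₁+r₂)
        + (Wf c (min (r₁+r₂) (2*π-(r₁+r₂))) - Wf c (r₁-r₂))/16 := by ring
  rw [hval] at comb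
  refine comb.congr_fun fun k => ?_
  symm
  show (1/2) * (Real.cos (((k:ℝ)+1)*(r₁-r₂)) / ((k:ℝ)+1)^2)
      - (1/2) * (Real.cos (((k:ℝ)+1)*(r₁+r₂)) / ((k:ℝ)+1)^2)
      - (1/4) * ((Real.cos (((k:ℝ)+1)*(c+(r₁-r₂))) + Real.cos (((k:ℝ)+1)*(c-(r₁-r₂)))) / ((k:ℝ)+1)^2)
      + (1/4) * ((Real.cos (((k:ℝ)+1)*(c+(r₁+r₂))) + Real.cos (((k:ℝ)+1)*(c-(r₁+r₂)))) / ((k:ℝ)+1)^2)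
      = (1 - Real.cos (((k:ℝ)+1)*c)) * sprod [r₁,r₂] k / ((k:ℝ)+1)^([r₁,r₂].length)
  rw [sprod_cons, sprod_cons]
  show _ = (1 - Real.cos (((k:ℝ)+1)*c)) *
      (Real.sin (((k:ℝ)+1)*r₁) * (Real.sin (((k:ℝ)+1)*r₂) * sprod [] k)) / ((k:ℝ)+1)^(2:ℕ)
  have hnil : sprod ([] : List ℝ) k = 1 := by simp [sprod]
  rw [hnil]
  have hK2 : ((k:ℝ)+1)^(2:ℕ) ≠ 0 := by positivity
  field_simp
  rw [show ((k:ℝ)+1)*(c+(r₁-r₂)) = ((k:ℝ)+1)*c + (((k:ℝ)+1)*r₁ - ((k:ℝ)+1)*r₂) by ring,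
     show ((k:ℝ)+1)*(c-(r₁-r₂)) = ((k:ℝ)+1)*c - (((k:ℝ)+1)*r₁ - ((k:ℝ)+1)*r₂) by ring,
     show ((k:ℝ)+1)*(c+(r₁+r₂)) = ((k:ℝ)+1)*c + (((k:ℝ)+1)*r₁ + ((k:ℝ)+1)*r₂) by ring,
     show ((k:ℝ)+1)*(c-(r₁+r₂)) = ((k:ℝ)+1)*c - (((k:ℝ)+1)*r₁ + ((k:ℝ)+1)*r₂) by ring,
     show ((k:ℝ)+1)*(r₁-r₂) = ((k:ℝ)+1)*r₁ - ((k:ℝ)+1)*r₂ by ring,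
     show ((k:ℝ)+1)*(r₁+r₂) = ((k:ℝ)+1)*r₁ + ((k:ℝ)+1)*r₂ by ring]
  simp only [Real.cos_add, Real.cos_sub, Real.sin_add, Real.sin_sub]
  ring

lemma base_mono_sorted {r₁ r₂ : ℝ} (h₂0 : 0 < r₂) (h₂₁ : r₂ ≤ r₁) (h₁π : r₁ < π) :
    MonotoneOn (Tt [r₁, r₂]) (Set.Icc 0 π) := by
  have hπ := Real.pi_pos
  intro c₁ hc₁ c₂ hc₂ h12
  have E1 := (base_hasSum r₁ r₂ c₁ h₂0 h₂₁ h₁π hc₁.1 hc₁.2).tsum_eq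
  have E2 := (base_hasSum r₁ r₂ c₂ h₂0 h₂₁ h₁π hc₂.1 hc₂.2).tsum_eq
  show Tt [r₁,r₂] c₁ ≤ Tt [r₁,r₂] c₂
  unfold Tt
  rw [E1, E2]
  have hW : Wf c₁ (min (r₁+r₂) (2*π-(r₁+r₂))) - Wf c₁ (r₁-r₂)
      ≤ Wf c₂ (min (r₁+r₂) (2*π-(r₁+r₂))) - Wf c₂ (r₁-r₂) := by
    apply Wmono (by linarith) ?_ ?_ hc₁.1 h12 hc₂.2
    · rcases le_total (r₁+r₂) (2*π-(r₁+r₂)) with h | h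
      · rw [min_eq_left h]; linarith
      · rw [min_eq_right h]; linarith
    · rcases le_total (r₁+r₂) (2*π-(r₁+r₂)) with h | h
      · rw [min_eq_left h]; linarith
      · rw [min_eq_right h]; linarith
  linarith

lemma base_mono {r₁ r₂ : ℝ} (h₁ : 0 < r₁) (h₁π : r₁ < π) (h₂ : 0 < r₂) (h₂π : r₂ < π) :
    MonotoneOn (Tt [r₁, r₂]) (Set.Icc 0 π) := by
  rcases le_total r₂ r₁ with h | h
  · exact base_mono_sorted h₂ h h₁π
  · have hperm : ([r₁, r₂] : List ℝ).Perm [r₂, r₁] := List.Perm.swap _ _ _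
    have : Tt [r₁, r₂] = Tt [r₂, r₁] := funext fun c => Tt_perm hperm c
    rw [this]
    exact base_mono_sorted h₁ h h₂π

end VnAux4

noncomputable section VnAux5

lemma hasDerivAt_sin_affine {K : ℝ} (hK : K ≠ 0) (r w : ℝ) :
    HasDerivAt (fun u => Real.sin (K*(u + r)) / K) (Real.cos (K*(w + r))) w := by
  have h1 : HasDerivAt (fun u : ℝ => K*(u + r)) K w := by
    simpa using ((hasDerivAt_id w).add_const r).const_mul K
  have h2 := (Real.hasDerivAt_sin (K*(w + r))).comp w h1
  have h3 := h2.div_const K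
  simpa [mul_comm, mul_div_assoc, mul_div_cancel_left₀ _ hK] using h3

/-- interchange of tsum and interval integral for our term shapes -/
lemma tsum_intervalIntegral_swap_s15 (g : ℕ → ℝ → ℝ) (c₁ c₂ : ℝ) (h : c₁ ≤ c₂)
    (hcont : ∀ k, Continuous (g k))
    (hbound : ∀ k w, |g k w| ≤ 4 / ((k:ℝ)+1)^2) :
    ∫ w in c₁..c₂, (∑' k, g k w) = ∑' k, ∫ w in c₁..c₂, g k w := by
  rw [intervalIntegral.integral_of_le h]
  have hint : ∀ k : ℕ, Integrable (g k) (volume.restrict (Set.Ioc c₁ c₂)) := fun k =>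
    (hcont k).integrableOn_Ioc
  have hnorm : ∀ k : ℕ, (∫ w in Set.Ioc c₁ c₂, ‖g k w‖) ≤ (c₂ - c₁) * (4 / ((k:ℝ)+1)^2) := by
    intro k
    calc (∫ w in Set.Ioc c₁ c₂, ‖g k w‖)
        ≤ ∫ _ in Set.Ioc c₁ c₂, (4 / ((k:ℝ)+1)^2) := by
          apply setIntegral_mono_on (hint k).norm (integrableOn_const measure_Ioc_lt_top.ne)
            measurableSet_Ioc (fun w _ => hbound k w)
      _ = (c₂ - c₁) * (4 / ((k:ℝ)+1)^2) := by
          rw [setIntegral_const, Real.volume_real_Ioc_of_le h, smul_eq_mul]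
  have hsum : Summable (fun k : ℕ => ∫ w in Set.Ioc c₁ c₂, ‖g k w‖) := by
    apply summable_aux ((c₂ - c₁) * 4)
    intro k
    rw [abs_of_nonneg (integral_nonneg (fun w => norm_nonneg _))]
    calc (∫ w in Set.Ioc c₁ c₂, ‖g k w‖) ≤ (c₂ - c₁) * (4 / ((k:ℝ)+1)^2) := hnorm k
      _ = (c₂ - c₁) * 4 / ((k:ℝ)+1)^2 := by ring
  have hswap := MeasureTheory.integral_tsum_of_summable_integral_norm hint hsum
  rw [← hswap]
  exact tsum_congr fun k => (intervalIntegral.integral_of_le h).symm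

lemma Tdiff (L' : List ℝ) (hlen : 2 ≤ L'.length) (r c₁ c₂ : ℝ) (h : c₁ ≤ c₂) :
    Tt (r :: L') c₂ - Tt (r :: L') c₁
      = (1/2) * ∫ w in c₁..c₂, (Tt L' (w + r) - Tt L' (w - r)) := by
  classical
  set q := L'.length with hq
  set g : ℕ → ℝ → ℝ := fun k w =>
    (Real.cos (((k:ℝ)+1)*(w - r)) - Real.cos (((k:ℝ)+1)*(w + r))) * sprod L' k / ((k:ℝ)+1)^q
    with hg
  have hKpos : ∀ k : ℕ, (0:ℝ) < ((k:ℝ)+1) := fun k => by positivity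
  have gbound : ∀ k w, |g k w| ≤ 4 / ((k:ℝ)+1)^2 := by
    intro k w
    rw [hg]
    simp only []
    rw [abs_div, abs_mul, abs_of_nonneg (by positivity : (0:ℝ) ≤ ((k:ℝ)+1)^q)]
    have h1 : |Real.cos (((k:ℝ)+1)*(w - r)) - Real.cos (((k:ℝ)+1)*(w + r))| ≤ 2 := by
      have := Real.neg_one_le_cos (((k:ℝ)+1)*(w - r))
      have := Real.cos_le_one (((k:ℝ)+1)*(w - r))
      have := Real.neg_one_le_cos (((k:ℝ)+1)*(w + r))
      have := Real.cos_le_one (((k:ℝ)+1)*(w + r))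
      rw [abs_le]; constructor <;> linarith
    have hnum : |Real.cos (((k:ℝ)+1)*(w - r)) - Real.cos (((k:ℝ)+1)*(w + r))| * |sprod L' k| ≤ 2 := by
      calc |Real.cos (((k:ℝ)+1)*(w - r)) - Real.cos (((k:ℝ)+1)*(w + r))| * |sprod L' k|
          ≤ 2 * 1 := mul_le_mul h1 (sprod_abs_le_one L' k) (abs_nonneg _) (by norm_num)
        _ = 2 := by ring
    rw [div_le_div_iff₀ (by positivity) (by positivity)]
    have hpw := pow_K_le k hlen
    have hp2 : (0:ℝ) ≤ ((k:ℝ)+1)^2 := by positivity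
    have habs : (0:ℝ) ≤ |Real.cos (((k:ℝ)+1)*(w - r)) - Real.cos (((k:ℝ)+1)*(w + r))| * |sprod L' k| :=
      mul_nonneg (abs_nonneg _) (abs_nonneg _)
    nlinarith
  have hcont : ∀ k, Continuous (g k) := by
    intro k; rw [hg]; dsimp only; fun_prop
  have hrep : ∀ w, Tt L' (w + r) - Tt L' (w - r) = ∑' k, g k w := by
    intro w
    have S1 := summable_T L' hlen (w + r)
    have S2 := summable_T L' hlen (w - r)
    unfold Tt
    rw [← Summable.tsum_sub S1 S2]
    exact tsum_congr fun k => by rw [hg]; dsimp only; ring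
  have hswap : ∫ w in c₁..c₂, (∑' k, g k w) = ∑' k, ∫ w in c₁..c₂, g k w :=
    tsum_intervalIntegral_swap_s15 g c₁ c₂ h hcont gbound
  have heval : ∀ k : ℕ, (∫ w in c₁..c₂, g k w)
      = 2 * ((Real.cos (((k:ℝ)+1)*c₁) - Real.cos (((k:ℝ)+1)*c₂)) * sprod (r :: L') k
          / ((k:ℝ)+1)^((r :: L').length)) := by
    intro k
    have hK : ((k:ℝ)+1) ≠ 0 := by positivity
    have hder : ∀ w ∈ Set.uIcc c₁ c₂,
        HasDerivAt (fun w => (Real.sin (((k:ℝ)+1)*(w + -r))/((k:ℝ)+1)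
            - Real.sin (((k:ℝ)+1)*(w + r))/((k:ℝ)+1)) * (sprod L' k / ((k:ℝ)+1)^q))
          (g k w) w := by
      intro w _
      have d1 := hasDerivAt_sin_affine hK (-r) w
      have d2 := hasDerivAt_sin_affine hK r w
      have hd := (d1.sub d2).mul_const (sprod L' k / ((k:ℝ)+1)^q)
      refine hd.congr_deriv ?_
      rw [hg]; dsimp only
      rw [show w + -r = w - r by ring]
      ring
    have hint : IntervalIntegrable (g k) volume c₁ c₂ := (hcont k).intervalIntegrable _ _
    rw [intervalIntegral.integral_eq_sub_of_hasDerivAt hder hint]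
    rw [sprod_cons]
    show _ = 2 * ((Real.cos (((k:ℝ)+1)*c₁) - Real.cos (((k:ℝ)+1)*c₂))
        * (Real.sin (((k:ℝ)+1)*r) * sprod L' k) / ((k:ℝ)+1)^(q+1))
    have hKq : ((k:ℝ)+1)^(q+1) = ((k:ℝ)+1)^q * ((k:ℝ)+1) := pow_succ _ q
    rw [hKq]
    rw [show ((k:ℝ)+1)*(c₂ + -r) = ((k:ℝ)+1)*c₂ - ((k:ℝ)+1)*r by ring,
       show ((k:ℝ)+1)*(c₂ + r) = ((k:ℝ)+1)*c₂ + ((k:ℝ)+1)*r by ring,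
       show ((k:ℝ)+1)*(c₁ + -r) = ((k:ℝ)+1)*c₁ - ((k:ℝ)+1)*r by ring,
       show ((k:ℝ)+1)*(c₁ + r) = ((k:ℝ)+1)*c₁ + ((k:ℝ)+1)*r by ring,
       Real.sin_sub, Real.sin_add, Real.sin_sub, Real.sin_add]
    field_simp
    ring
  -- final combination
  have hterm_sum : Summable (fun k : ℕ =>
      (Real.cos (((k:ℝ)+1)*c₁) - Real.cos (((k:ℝ)+1)*c₂)) * sprod (r :: L') k
        / ((k:ℝ)+1)^((r :: L').length)) := by
    apply summable_aux 2
    intro k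
    apply term_bound (g := fun k => Real.cos (((k:ℝ)+1)*c₁) - Real.cos (((k:ℝ)+1)*c₂)) ?_ _ ?_
    · intro j
      have := Real.neg_one_le_cos (((j:ℝ)+1)*c₁)
      have := Real.cos_le_one (((j:ℝ)+1)*c₁)
      have := Real.neg_one_le_cos (((j:ℝ)+1)*c₂)
      have := Real.cos_le_one (((j:ℝ)+1)*c₂)
      rw [abs_le]; constructor <;> · linarith
    · simp only [List.length_cons]; omega
  have hLHS : Tt (r :: L') c₂ - Tt (r :: L') c₁ = ∑' k : ℕ,
      (Real.cos (((k:ℝ)+1)*c₁) - Real.cos (((k:ℝ)+1)*c₂)) * sprod (r :: L') k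
        / ((k:ℝ)+1)^((r :: L').length) := by
    have S1 := summable_T (r :: L') (by simp only [List.length_cons]; omega) c₂
    have S2 := summable_T (r :: L') (by simp only [List.length_cons]; omega) c₁
    unfold Tt
    rw [← Summable.tsum_sub S1 S2]
    exact tsum_congr fun k => by ring
  rw [hLHS]
  conv_rhs => rw [funext hrep]  
  rw [hswap]
  rw [tsum_congr heval, tsum_mul_left]
  ring

lemma Tslot (L' : List ℝ) (hlen : 2 ≤ L'.length) (c x y : ℝ) (h : x ≤ y) :
    Tt (y :: L') c - Tt (x :: L') c
      = ∫ r in x..y, ((1/2) * Tt L' (r + c) + (1/2) * Tt L' (r - c) - Tt L' r) := by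
  classical
  set q := L'.length with hq
  set g : ℕ → ℝ → ℝ := fun k u =>
    (1 - Real.cos (((k:ℝ)+1)*c)) * Real.cos (((k:ℝ)+1)*u) * sprod L' k / ((k:ℝ)+1)^q
    with hg
  have gbound : ∀ k u, |g k u| ≤ 4 / ((k:ℝ)+1)^2 := by
    intro k u
    rw [hg]; dsimp only
    rw [abs_div, abs_mul, abs_mul, abs_of_nonneg (by positivity : (0:ℝ) ≤ ((k:ℝ)+1)^q)]
    have h1 : |1 - Real.cos (((k:ℝ)+1)*c)| ≤ 2 := by
      have := Real.neg_one_le_cos (((k:ℝ)+1)*c)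
      have := Real.cos_le_one (((k:ℝ)+1)*c)
      rw [abs_le]; constructor <;> linarith
    have h2 : |Real.cos (((k:ℝ)+1)*u)| ≤ 1 := Real.abs_cos_le_one _
    have h3 := sprod_abs_le_one L' k
    have hnum : |1 - Real.cos (((k:ℝ)+1)*c)| * |Real.cos (((k:ℝ)+1)*u)| * |sprod L' k| ≤ 2 := by
      calc |1 - Real.cos (((k:ℝ)+1)*c)| * |Real.cos (((k:ℝ)+1)*u)| * |sprod L' k|
          ≤ 2 * 1 * 1 := by
            apply mul_le_mul (mul_le_mul h1 h2 (abs_nonneg _) (by norm_num)) h3 (abs_nonneg _)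
            norm_num
        _ = 2 := by ring
    rw [div_le_div_iff₀ (by positivity) (by positivity)]
    have hpw := pow_K_le k hlen
    have habs : (0:ℝ) ≤ |1 - Real.cos (((k:ℝ)+1)*c)| * |Real.cos (((k:ℝ)+1)*u)| * |sprod L' k| := by
      positivity
    nlinarith
  have hcont : ∀ k, Continuous (g k) := by
    intro k; rw [hg]; dsimp only; fun_prop
  have hrep : ∀ u, (1/2) * Tt L' (u + c) + (1/2) * Tt L' (u - c) - Tt L' u = ∑' k, g k u := by
    intro u
    have S1 := summable_T L' hlen (u + c)
    have S2 := summable_T L' hlen (u - c)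
    have S3 := summable_T L' hlen u
    unfold Tt
    rw [← tsum_mul_left, ← tsum_mul_left, ← Summable.tsum_add (S1.mul_left _) (S2.mul_left _),
      ← Summable.tsum_sub ((S1.mul_left _).add (S2.mul_left _)) S3]
    refine tsum_congr fun k => ?_
    rw [hg]; dsimp only
    rw [show ((k:ℝ)+1)*(u+c) = ((k:ℝ)+1)*u + ((k:ℝ)+1)*c by ring,
       show ((k:ℝ)+1)*(u-c) = ((k:ℝ)+1)*u - ((k:ℝ)+1)*c by ring,
       Real.cos_add, Real.cos_sub]
    ring
  have hswap : ∫ u in x..y, (∑' k, g k u) = ∑' k, ∫ u in x..y, g k u :=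
    tsum_intervalIntegral_swap_s15 g x y h hcont gbound
  have heval : ∀ k : ℕ, (∫ u in x..y, g k u)
      = (1 - Real.cos (((k:ℝ)+1)*c)) * sprod (y :: L') k / ((k:ℝ)+1)^((y :: L').length)
        - (1 - Real.cos (((k:ℝ)+1)*c)) * sprod (x :: L') k / ((k:ℝ)+1)^((x :: L').length) := by
    intro k
    have hK : ((k:ℝ)+1) ≠ 0 := by positivity
    have hder : ∀ u ∈ Set.uIcc x y,
        HasDerivAt (fun u => (Real.sin (((k:ℝ)+1)*(u + 0))/((k:ℝ)+1))
            * ((1 - Real.cos (((k:ℝ)+1)*c)) * sprod L' k / ((k:ℝ)+1)^q))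
          (g k u) u := by
      intro u _
      have d1 := hasDerivAt_sin_affine hK 0 u
      have hd := d1.mul_const ((1 - Real.cos (((k:ℝ)+1)*c)) * sprod L' k / ((k:ℝ)+1)^q)
      refine hd.congr_deriv ?_
      rw [hg]; dsimp only
      rw [show u + (0:ℝ) = u by ring]
      ring
    have hint : IntervalIntegrable (g k) volume x y := (hcont k).intervalIntegrable _ _
    rw [intervalIntegral.integral_eq_sub_of_hasDerivAt hder hint]
    rw [sprod_cons, sprod_cons]
    show _ = (1 - Real.cos (((k:ℝ)+1)*c)) * (Real.sin (((k:ℝ)+1)*y) * sprod L' k) / ((k:ℝ)+1)^(q+1)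
      - (1 - Real.cos (((k:ℝ)+1)*c)) * (Real.sin (((k:ℝ)+1)*x) * sprod L' k) / ((k:ℝ)+1)^(q+1)
    rw [pow_succ, show y + (0:ℝ) = y by ring, show x + (0:ℝ) = x by ring]
    field_simp
  have S1 := summable_T (y :: L') (by simp only [List.length_cons]; omega) c
  have S2 := summable_T (x :: L') (by simp only [List.length_cons]; omega) c
  have hLHS : Tt (y :: L') c - Tt (x :: L') c = ∑' k : ℕ,
      ((1 - Real.cos (((k:ℝ)+1)*c)) * sprod (y :: L') k / ((k:ℝ)+1)^((y :: L').length)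
        - (1 - Real.cos (((k:ℝ)+1)*c)) * sprod (x :: L') k / ((k:ℝ)+1)^((x :: L').length)) := by
    unfold Tt
    rw [← Summable.tsum_sub S1 S2]
  rw [hLHS]
  conv_rhs => rw [funext hrep]
  rw [hswap]
  exact (tsum_congr heval).symm


end VnAux5

noncomputable section VnAux6

lemma shift_down {f : ℝ → ℝ} (hper : ∀ c, f (c + 2*π) = f c) (c : ℝ) :
    f c = f (c - 2*π) := by
  calc f c = f ((c - 2*π) + 2*π) := by congr 1; ring
    _ = f (c - 2*π) := hper _

lemma shift_reflect {f : ℝ → ℝ} (heven : ∀ c, f (-c) = f c) (hper : ∀ c, f (c + 2*π) = f c)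
    (c : ℝ) : f c = f (2*π - c) := by
  calc f c = f (c - 2*π) := shift_down hper c
    _ = f (-(2*π - c)) := by congr 1; ring
    _ = f (2*π - c) := heven _

lemma refl_le {f : ℝ → ℝ} (heven : ∀ c, f (-c) = f c) (hper : ∀ c, f (c + 2*π) = f c)
    (hmono : MonotoneOn f (Set.Icc 0 π)) {w s : ℝ} (hw0 : 0 ≤ w) (hwπ : w ≤ π)
    (hs0 : 0 ≤ s) (hsπ : s ≤ π) : f (|w - s|) ≤ f (w + s) := by
  have hπ := Real.pi_pos
  have habs0 : 0 ≤ |w - s| := abs_nonneg _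
  have habsπ : |w - s| ≤ π := abs_le.mpr ⟨by linarith, by linarith⟩
  rcases le_total (w + s) π with hle | hge
  · exact hmono ⟨habs0, habsπ⟩ ⟨by linarith, hle⟩ (abs_le.mpr ⟨by linarith, by linarith⟩)
  · rw [shift_reflect heven hper (w + s)]
    exact hmono ⟨habs0, habsπ⟩ ⟨by linarith, by linarith⟩
      (abs_le.mpr ⟨by linarith, by linarith⟩)

lemma Tmono : ∀ (L : List ℝ), 2 ≤ L.length → (∀ r ∈ L, 0 < r ∧ r < π) →
    MonotoneOn (Tt L) (Set.Icc 0 π) := by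
  intro L
  induction L with
  | nil => intro h; simp at h
  | cons r L' ih =>
    intro hlen hmem
    by_cases h2 : 2 ≤ L'.length
    · have hmem' : ∀ s ∈ L', 0 < s ∧ s < π := fun s hs => hmem s (List.mem_cons_of_mem r hs)
      have M := ih h2 hmem'
      have hr := hmem r List.mem_cons_self
      intro c₁ hc₁ c₂ hc₂ h12
      have hkey := Tdiff L' h2 r c₁ c₂ h12
      have hnonneg : 0 ≤ ∫ w in c₁..c₂, (Tt L' (w + r) - Tt L' (w - r)) := by
        apply intervalIntegral.integral_nonneg h12
        intro w hw
        have hw0 : 0 ≤ w := le_trans hc₁.1 hw.1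
        have hwπ : w ≤ π := le_trans hw.2 hc₂.2
        have hRR := refl_le (Tt_even L') (Tt_shift L') M hw0 hwπ hr.1.le hr.2.le
        have he : Tt L' (w - r) = Tt L' (|w - r|) := by
          rcases abs_cases (w - r) with ⟨he, _⟩ | ⟨he, _⟩
          · rw [he]
          · rw [he]; exact (Tt_even L' (w - r)).symm
        rw [sub_nonneg, he]
        exact hRR
      show Tt (r :: L') c₁ ≤ Tt (r :: L') c₂
      linarith [hkey, hnonneg]
    · have hl1 : L'.length = 1 := by simp only [List.length_cons] at hlen; omega
      obtain ⟨r₂, rfl⟩ := List.length_eq_one_iff.mp hl1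
      have h1 := hmem r List.mem_cons_self
      have h2 := hmem r₂ (by simp)
      exact base_mono h1.1 h1.2 h2.1 h2.2

lemma slot_le (L' : List ℝ) (h2 : 2 ≤ L'.length) (hmem : ∀ s ∈ L', 0 < s ∧ s < π)
    {x y : ℝ} (hx : π/2 ≤ x) (hxy : x ≤ y) (hy : y < π) :
    Tt (y :: L') (2*x) ≤ Tt (x :: L') (2*x) := by
  have hπ := Real.pi_pos
  have hkey := Tslot L' h2 (2*x) x y hxy
  have M := Tmono L' h2 hmem
  have heven := Tt_even L'
  have hper := Tt_shift L'
  have hptwise : ∀ r ∈ Set.Icc x y,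
      (1/2) * Tt L' (r + 2*x) + (1/2) * Tt L' (r - 2*x) - Tt L' r ≤ 0 := by
    intro r hr
    have hrx : x ≤ r := hr.1
    have hry : r ≤ y := hr.2
    have hrπ : r < π := lt_of_le_of_lt hry hy
    have hr0 : 0 < r := lt_of_lt_of_le (by linarith) hrx
    have e1 : Tt L' (r - 2*x) = Tt L' (2*x - r) := by
      rw [show r - 2*x = -(2*x - r) by ring, heven]
    have i1 : Tt L' (2*x - r) ≤ Tt L' r :=
      M ⟨by linarith, by linarith⟩ ⟨by linarith, by linarith⟩ (by linarith)
    have i2 : Tt L' (r + 2*x) ≤ Tt L' r := by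
      rcases le_total (r + 2*x) (2*π) with hcase | hcase
      · have e2 : Tt L' (r + 2*x) = Tt L' (2*π - (r + 2*x)) :=
          shift_reflect heven hper (r + 2*x)
        rw [e2]
        exact M ⟨by linarith, by linarith⟩ ⟨by linarith, by linarith⟩ (by linarith)
      · have e2 : Tt L' (r + 2*x) = Tt L' ((r + 2*x) - 2*π) := shift_down hper (r + 2*x)
        rw [e2]
        exact M ⟨by linarith, by linarith⟩ ⟨by linarith, by linarith⟩ (by linarith)
    rw [e1]
    linarith
  have hneg : (∫ r in x..y, ((1/2) * Tt L' (r + 2*x) + (1/2) * Tt L' (r - 2*x) - Tt L' r)) ≤ 0 := by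
    have hneg' : 0 ≤ ∫ r in x..y,
        (-((1/2) * Tt L' (r + 2*x) + (1/2) * Tt L' (r - 2*x) - Tt L' r)) := by
      apply intervalIntegral.integral_nonneg hxy
      intro r hr
      rw [neg_nonneg]
      exact hptwise r hr
    rw [intervalIntegral.integral_neg] at hneg'
    linarith
  linarith [hkey, hneg]

lemma chain (m : ℕ) (hm : 3 ≤ m) {x y : ℝ} (hx : π/2 ≤ x) (hxy : x ≤ y) (hy : y < π) :
    Tt (List.replicate m y) (2*x) ≤ Tt (List.replicate m x) (2*x) := by
  have hπ := Real.pi_pos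
  have hx0 : 0 < x := lt_of_lt_of_le (by linarith) hx
  have hxπ : x < π := lt_of_le_of_lt hxy hy
  have hy0 : 0 < y := lt_of_lt_of_le hx0 hxy
  have hmemolist : ∀ (j i : ℕ) (s : ℝ),
      s ∈ List.replicate j x ++ List.replicate i y → 0 < s ∧ s < π := by
    intro j i s hs
    rcases List.mem_append.mp hs with h | h
    · rw [List.eq_of_mem_replicate h]; exact ⟨hx0, hxπ⟩
    · rw [List.eq_of_mem_replicate h]; exact ⟨hy0, hy⟩
  have key : ∀ j, j ≤ m → Tt (List.replicate m y) (2*x)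
      ≤ Tt (List.replicate j x ++ List.replicate (m - j) y) (2*x) := by
    intro j
    induction j with
    | zero => intro _; simp
    | succ j ihj =>
      intro hj
      have hj' : j ≤ m := by omega
      refine le_trans (ihj hj') ?_
      have hmj : m - j = (m - (j+1)) + 1 := by omega
      rw [hmj]
      have p1 : (List.replicate j x ++ List.replicate ((m - (j+1)) + 1) y).Perm
          (y :: (List.replicate j x ++ List.replicate (m - (j+1)) y)) := by
        rw [List.replicate_succ]
        exact List.perm_middle
      have p2 : (x :: (List.replicate j x ++ List.replicate (m - (j+1)) y))
          = List.replicate (j+1) x ++ List.replicate (m - (j+1)) y := by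
        rw [List.replicate_succ, List.cons_append]
      rw [Tt_perm p1 (2*x), ← p2]
      apply slot_le _ ?_ (hmemolist j (m - (j+1))) hx hxy hy
      simp only [List.length_append, List.length_replicate]
      omega
  have := key m (le_refl m)
  simpa using this

lemma bridge (n : ℕ) (hn : 4 ≤ n) (z : ℝ) :
    (∑' k : ℕ, (Real.sin (((k:ℝ)+1)*z))^n / ((k:ℝ)+1)^(n-2))
      = (1/2) * Tt (List.replicate (n-2) z) (2*z) := by
  unfold Tt
  rw [← tsum_mul_left]
  refine tsum_congr fun k => ?_
  rw [List.length_replicate]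
  have hsp : sprod (List.replicate (n-2) z) k = (Real.sin (((k:ℝ)+1)*z))^(n-2) := by
    unfold sprod; rw [List.map_replicate, List.prod_replicate]
  rw [hsp]
  have hcos : 1 - Real.cos (((k:ℝ)+1)*(2*z)) = 2 * (Real.sin (((k:ℝ)+1)*z))^2 := by
    rw [show ((k:ℝ)+1)*(2*z) = 2*(((k:ℝ)+1)*z) by ring, Real.cos_two_mul,
      show (2:ℝ) * Real.cos (((k:ℝ)+1)*z)^2 - 1
        = 1 - 2*(1 - Real.cos (((k:ℝ)+1)*z)^2) by ring, ← Real.sin_sq]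
    ring
  rw [hcos]
  have hpow : (Real.sin (((k:ℝ)+1)*z))^2 * (Real.sin (((k:ℝ)+1)*z))^(n-2)
      = (Real.sin (((k:ℝ)+1)*z))^n := by
    rw [← pow_add]; congr 1; omega
  rw [← hpow]
  ring

lemma F4closed (z : ℝ) (hz1 : π/2 ≤ z) (hz2 : z < π) :
    (∑' k : ℕ, (Real.sin (((k:ℝ)+1)*z))^4 / ((k:ℝ)+1)^2) = π^2/4 - π*z/4 := by
  have hπ := Real.pi_pos
  have H0 : HasSum (fun k : ℕ => Real.cos (((k:ℝ)+1)*0) / ((k:ℝ)+1)^2) (Pf 0) :=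
    hasSum_P le_rfl (by linarith)
  have H2 := hasSum_P (θ := 2*z) (by linarith) (by linarith)
  have H4 := hasSum_P_of (arg := 4*z) (rep := 4*z - 2*π)
    (fun k => cos_shift_down (4*z) k) (by linarith) (by linarith)
  have comb := ((H0.mul_left (3/8)).sub (H2.mul_left (1/2))).add (H4.mul_left (1/8))
  have hfin : HasSum (fun k : ℕ => (Real.sin (((k:ℝ)+1)*z))^4 / ((k:ℝ)+1)^2)
      ((3/8) * Pf 0 - (1/2) * Pf (2*z) + (1/8) * Pf (4*z - 2*π)) := by
    refine comb.congr_fun fun k => ?_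
    rw [mul_zero, Real.cos_zero,
      show ((k:ℝ)+1)*(2*z) = 2*(((k:ℝ)+1)*z) by ring,
      show ((k:ℝ)+1)*(4*z) = 2*(2*(((k:ℝ)+1)*z)) by ring,
      Real.cos_two_mul (2*(((k:ℝ)+1)*z)), Real.cos_two_mul (((k:ℝ)+1)*z)]
    have hs : (Real.sin (((k:ℝ)+1)*z))^4 = (1 - Real.cos (((k:ℝ)+1)*z)^2)^2 := by
      rw [show (Real.sin (((k:ℝ)+1)*z))^4 = ((Real.sin (((k:ℝ)+1)*z))^2)^2 by ring, Real.sin_sq]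
    rw [hs]
    ring
  rw [hfin.tsum_eq]
  unfold Pf
  ring

end VnAux6

open Real

theorem V_n_antitone_right (n : ℕ) (hn : 4 ≤ n) (x y : ℝ)
    (hx : π / 2 ≤ x) (hxy : x ≤ y) (hy : y < π) :
    ∑' k : ℕ, (Real.sin (((k : ℝ) + 1) * y)) ^ n / ((k : ℝ) + 1) ^ (n - 2) ≤
      ∑' k : ℕ, (Real.sin (((k : ℝ) + 1) * x)) ^ n / ((k : ℝ) + 1) ^ (n - 2) := by
  have hπ := Real.pi_pos
  have hyx : π/2 ≤ y := le_trans hx hxy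
  have hxπ : x < π := lt_of_le_of_lt hxy hy
  rcases eq_or_lt_of_le hn with h4 | h5
  · -- n = 4
    have hn4 : n = 4 := h4.symm
    subst hn4
    have e1 := F4closed x hx hxπ
    have e2 := F4closed y hyx hy
    show (∑' k : ℕ, (Real.sin (((k:ℝ)+1)*y))^4 / ((k:ℝ)+1)^(4-2)) ≤
      (∑' k : ℕ, (Real.sin (((k:ℝ)+1)*x))^4 / ((k:ℝ)+1)^(4-2))
    have h42 : (4 - 2 : ℕ) = 2 := by norm_num
    rw [h42, e1, e2]
    nlinarith [Real.pi_pos]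
  · -- n ≥ 5
    have hm3 : 3 ≤ n - 2 := by omega
    rw [bridge n hn x, bridge n hn y]
    have hmem : ∀ s ∈ List.replicate (n-2) y, 0 < s ∧ s < π := by
      intro s hs
      rw [List.eq_of_mem_replicate hs]
      constructor <;> linarith
    have L1 : Tt (List.replicate (n-2) y) (2*y) ≤ Tt (List.replicate (n-2) y) (2*x) := by
      have M := Tmono (List.replicate (n-2) y)
        (by rw [List.length_replicate]; omega) hmem
      have heven := Tt_even (List.replicate (n-2) y)
      have hper := Tt_shift (List.replicate (n-2) y)
      have e1 : Tt (List.replicate (n-2) y) (2*y)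
          = Tt (List.replicate (n-2) y) (2*π - 2*y) := shift_reflect heven hper (2*y)
      have e2 : Tt (List.replicate (n-2) y) (2*x)
          = Tt (List.replicate (n-2) y) (2*π - 2*x) := shift_reflect heven hper (2*x)
      rw [e1, e2]
      exact M ⟨by linarith, by linarith⟩ ⟨by linarith, by linarith⟩ (by linarith)
    have L2 := chain (n-2) hm3 hx hxy hy
    linarith
end

section
/- Let r_1, r_2, r_3 be real numbers with 0 < r_i < π for all i, satisfying the strict triangle inequalities r_1 < r_2 + r_3, r_2 < r_1 + r_3, r_3 < r_1 + r_2, and r_1 + r_2 + r_3 < 2π. Then the partial sums Σ_{k=1}^{N} sin(k r_1)·sin(k r_2)·sin(k r_3)/k converge to π/4 as N → ∞. Equivalently, the symplectic volume (4/π)·Σ_{k=1}^∞ sin(k r_1) sin(k r_2) sin(k r_3)/k of the moduli space of spherical triangles with side-lengths (r_1, r_2, r_3) equals 1, regardless of the side-lengths (subject to these non-degeneracy conditions). -/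
open Real Filter

open Complex in
lemma sawtooth {x : ℝ} (hx0 : 0 < x) (hx2 : x < 2 * π) :
    Tendsto (fun N : ℕ => ∑ k ∈ Finset.range N,
      Real.sin (((k : ℝ) + 1) * x) / ((k : ℝ) + 1)) atTop (nhds ((π - x) / 2)) := by
  have pi_pos := Real.pi_pos
  have hs : 0 < Real.sin (x / 2) :=
    Real.sin_pos_of_pos_of_lt_pi (by linarith) (by linarith)
  have h3 : 2 * (x / 2) = x := by ring
  have hcosx : Real.cos x = 1 - 2 * Real.sin (x / 2) ^ 2 := by
    have h2 := Real.cos_two_mul' (x / 2)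
    rw [h3] at h2
    nlinarith [Real.sin_sq_add_cos_sq (x / 2)]
  have hsinx : Real.sin x = 2 * Real.sin (x / 2) * Real.cos (x / 2) := by
    have h2 := Real.sin_two_mul (x / 2)
    rw [h3] at h2
    linarith
  -- the boundary point
  set w : ℂ := Complex.exp (x * Complex.I) with hw
  have hwnorm : ‖w‖ = 1 := Complex.norm_exp_ofReal_mul_I x
  have he : w ≠ 1 := by
    rw [hw, Ne, Complex.exp_eq_one_iff]
    rintro ⟨n, hn⟩
    have h' : (x : ℂ) = ((n * (2 * π) : ℝ) : ℂ) := by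
      have := mul_right_cancel₀ Complex.I_ne_zero
        (by push_cast; linear_combination hn :
          (x : ℂ) * Complex.I = ((n * (2 * π) : ℝ) : ℂ) * Complex.I)
      exact this
    have hx' : x = n * (2 * π) := by exact_mod_cast h'
    rcases lt_trichotomy (n : ℝ) 0 with h | h | h
    · nlinarith
    · rw [h] at hx'; simp at hx'; linarith
    · have : (1 : ℝ) ≤ n := by exact_mod_cast (by exact_mod_cast h : 0 < n)
      nlinarith
  -- bounded partial sums of sin((k+1)x)
  have hgeom : ∀ n : ℕ, ‖∑ i ∈ Finset.range n, Real.sin (((i : ℝ) + 1) * x)‖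
      ≤ 2 / ‖w - 1‖ := by
    intro n
    have hterm : ∀ i : ℕ, w ^ (i + 1) = Complex.exp (Complex.ofReal (((i : ℝ) + 1) * x) * Complex.I) := by
      intro i
      rw [hw, ← Complex.exp_nat_mul]
      congr 1
      push_cast
      ring
    have him : (∑ i ∈ Finset.range n, w ^ (i + 1)).im
        = ∑ i ∈ Finset.range n, Real.sin (((i : ℝ) + 1) * x) := by
      rw [Complex.im_sum]
      refine Finset.sum_congr rfl fun i _ => ?_
      rw [hterm i, Complex.exp_ofReal_mul_I_im]
    have hsum : ∑ i ∈ Finset.range n, w ^ (i + 1) = w * ((w ^ n - 1) / (w - 1)) := by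
      rw [← geom_sum_eq he, Finset.mul_sum]
      exact Finset.sum_congr rfl fun i _ => by rw [pow_succ, mul_comm]
    calc ‖∑ i ∈ Finset.range n, Real.sin (((i : ℝ) + 1) * x)‖
        = |(∑ i ∈ Finset.range n, w ^ (i + 1)).im| := by rw [him, Real.norm_eq_abs]
      _ ≤ ‖∑ i ∈ Finset.range n, w ^ (i + 1)‖ := Complex.abs_im_le_norm _
      _ = ‖w‖ * (‖w ^ n - 1‖ / ‖w - 1‖) := by rw [hsum, norm_mul, norm_div]
      _ ≤ 1 * (2 / ‖w - 1‖) := by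
          rw [hwnorm, one_mul, one_mul]
          gcongr
          calc ‖w ^ n - 1‖ ≤ ‖w ^ n‖ + ‖(1 : ℂ)‖ := norm_sub_le _ _
            _ = 2 := by rw [norm_pow, hwnorm]; norm_num
      _ = 2 / ‖w - 1‖ := one_mul _
  -- Dirichlet's test: the partial sums form a Cauchy sequence, hence converge
  have hmono : Antitone (fun n : ℕ => ((n : ℝ) + 1)⁻¹) := by
    intro a b hab
    have : (a : ℝ) + 1 ≤ (b : ℝ) + 1 := by exact_mod_cast Nat.succ_le_succ hab
    exact inv_anti₀ (by positivity) this
  have h0 : Tendsto (fun n : ℕ => ((n : ℝ) + 1)⁻¹) atTop (nhds 0) := by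
    simpa [one_div] using tendsto_one_div_add_atTop_nhds_zero_nat (𝕜 := ℝ)
  have hC := hmono.cauchySeq_series_mul_of_tendsto_zero_of_bounded h0 hgeom
  have hfun : (fun n : ℕ => ∑ k ∈ Finset.range n,
      Real.sin (((k : ℝ) + 1) * x) / ((k : ℝ) + 1))
      = fun n : ℕ => ∑ i ∈ Finset.range n,
        ((i : ℝ) + 1)⁻¹ • Real.sin (((i : ℝ) + 1) * x) := by
    funext n
    exact Finset.sum_congr rfl fun i _ => by rw [smul_eq_mul, div_eq_inv_mul]
  obtain ⟨l, hl⟩ := cauchySeq_tendsto_of_complete hC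
  rw [hfun]
  -- it remains to identify the limit `l` with `(π - x)/2`
  suffices hlval : l = (π - x) / 2 by rwa [hlval] at hl
  -- Abel's limit theorem setup
  set F : ℕ → ℝ := fun n => if n = 0 then 0 else Real.sin (n * x) / n with hF
  have hFsum : Tendsto (fun n : ℕ => ∑ i ∈ Finset.range n, F i) atTop (nhds l) := by
    rw [← tendsto_add_atTop_iff_nat 1]
    have heq : ∀ n : ℕ, ∑ i ∈ Finset.range (n + 1), F i
        = ∑ i ∈ Finset.range n, ((i : ℝ) + 1)⁻¹ • Real.sin (((i : ℝ) + 1) * x) := by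
      intro n
      rw [Finset.sum_range_succ']
      have h00 : F 0 = 0 := if_pos rfl
      rw [h00, add_zero]
      refine Finset.sum_congr rfl fun i _ => ?_
      show F (i + 1) = _
      simp only [hF, Nat.succ_ne_zero, if_false, smul_eq_mul]
      push_cast
      ring
    simp only [heq]
    exact hl
  have hAbel := Real.tendsto_tsum_powerSeries_nhdsWithin_lt hFsum
  -- value of the power series for |r| < 1
  have hval : ∀ r : ℝ, |r| < 1 → ∑' n, F n * r ^ n = -(1 - (r : ℂ) * w).arg := by
    intro r hr
    have hz : ‖(r : ℂ) * w‖ < 1 := by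
      rw [norm_mul, hwnorm, mul_one, Complex.norm_real, Real.norm_eq_abs]
      exact hr
    have hlog := Complex.hasSum_taylorSeries_neg_log hz
    have him := Complex.imCLM.hasSum hlog
    have hterm : ∀ n : ℕ, Complex.imCLM ((((r : ℂ) * w) ^ n) / n) = F n * r ^ n := by
      intro n
      rcases Nat.eq_zero_or_pos n with rfl | hn
      · simp [hF]
      · have hne : n ≠ 0 := hn.ne'
        have hid : ((r : ℂ) * w) ^ n / n
            = Complex.ofReal (r ^ n / n) * Complex.exp (Complex.ofReal ((n : ℝ) * x) * Complex.I) := by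
          rw [mul_pow, hw, ← Complex.exp_nat_mul]
          push_cast
          ring
        rw [hid]
        simp only [Complex.imCLM_apply, Complex.im_ofReal_mul, Complex.exp_ofReal_mul_I_im]
        simp only [hF, if_neg hne]
        ring
    have him' : HasSum (fun n : ℕ => F n * r ^ n)
        (Complex.imCLM (-Complex.log (1 - (r : ℂ) * w))) := by
      simpa only [hterm] using him
    rw [him'.tsum_eq]
    simp [Complex.log_im]
  -- continuity of the argument at the boundary point
  have hre : 0 < ((1 : ℂ) - w).re := by
    rw [hw]
    simp only [Complex.sub_re, Complex.one_re, Complex.exp_ofReal_mul_I_re]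
    nlinarith
  have harg : Tendsto (fun r : ℝ => -((1 : ℂ) - (r : ℂ) * w).arg) (nhdsWithin 1 (Set.Iio 1))
      (nhds (-((1 : ℂ) - w).arg)) := by
    have hcont : ContinuousAt (fun r : ℝ => (1 : ℂ) - (r : ℂ) * w) 1 := by fun_prop
    have h1 : Tendsto (fun r : ℝ => (1 : ℂ) - (r : ℂ) * w) (nhdsWithin 1 (Set.Iio 1))
        (nhds ((1 : ℂ) - w)) := by
      have := hcont.tendsto
      simp only [Complex.ofReal_one, one_mul] at this
      exact this.mono_left nhdsWithin_le_nhds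
    have := ((Complex.continuousAt_arg (Or.inl hre)).tendsto.comp h1).neg
    simpa [Function.comp] using this
  have hAbel' : Tendsto (fun r : ℝ => -((1 : ℂ) - (r : ℂ) * w).arg)
      (nhdsWithin 1 (Set.Iio 1)) (nhds l) := by
    apply hAbel.congr'
    filter_upwards [Ioo_mem_nhdsLT_of_mem (⟨by norm_num, le_refl 1⟩ : (1:ℝ) ∈ Set.Ioc (-1 : ℝ) 1)]
      with r hr
    exact hval r (abs_lt.mpr ⟨hr.1, hr.2⟩)
  have hlarg : l = -((1 : ℂ) - w).arg := tendsto_nhds_unique hAbel' harg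
  -- the argument of 1 - exp(ix)
  have hargval : ((1 : ℂ) - w).arg = x / 2 - π / 2 := by
    have hfact : (1 : ℂ) - w = Complex.ofReal (2 * Real.sin (x / 2))
        * (Complex.cos (Complex.ofReal (x / 2 - π / 2))
          + Complex.sin (Complex.ofReal (x / 2 - π / 2)) * Complex.I) := by
      rw [← Complex.exp_mul_I]
      apply Complex.ext
      · simp only [Complex.sub_re, Complex.one_re, hw, Complex.exp_ofReal_mul_I_re,
          Complex.re_ofReal_mul]
        rw [show x / 2 - π / 2 = -(π / 2 - x / 2) by ring, Real.cos_neg,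
          Real.cos_pi_div_two_sub, hcosx]
        ring
      · simp only [Complex.sub_im, Complex.one_im, hw, Complex.exp_ofReal_mul_I_im,
          Complex.im_ofReal_mul]
        rw [show x / 2 - π / 2 = -(π / 2 - x / 2) by ring, Real.sin_neg,
          Real.sin_pi_div_two_sub, hsinx]
        ring
    rw [hfact, Complex.arg_real_mul _ (by linarith : (0:ℝ) < 2 * Real.sin (x / 2)),
      Complex.arg_cos_add_sin_mul_I ⟨by linarith, by linarith⟩]
  rw [hlarg, hargval]
  ring

theorem triangle_volume_const (r₁ r₂ r₃ : ℝ)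
    (h₁ : 0 < r₁ ∧ r₁ < π) (h₂ : 0 < r₂ ∧ r₂ < π) (h₃ : 0 < r₃ ∧ r₃ < π)
    (t₁ : r₁ < r₂ + r₃) (t₂ : r₂ < r₁ + r₃) (t₃ : r₃ < r₁ + r₂)
    (hsum : r₁ + r₂ + r₃ < 2 * π) :
    Filter.Tendsto
      (fun N : ℕ => ∑ k ∈ Finset.range N,
        Real.sin (((k : ℝ) + 1) * r₁) * Real.sin (((k : ℝ) + 1) * r₂) *
          Real.sin (((k : ℝ) + 1) * r₃) / ((k : ℝ) + 1))
      Filter.atTop (nhds (π / 4)) := by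
  obtain ⟨h₁a, h₁b⟩ := h₁
  obtain ⟨h₂a, h₂b⟩ := h₂
  obtain ⟨h₃a, h₃b⟩ := h₃
  have Ha := sawtooth (x := -r₁ + r₂ + r₃) (by linarith) (by linarith)
  have Hb := sawtooth (x := r₁ - r₂ + r₃) (by linarith) (by linarith)
  have Hc := sawtooth (x := r₁ + r₂ - r₃) (by linarith) (by linarith)
  have Hd := sawtooth (x := r₁ + r₂ + r₃) (by linarith) (by linarith)
  have H := (((Ha.add Hb).add Hc).sub Hd).div_const 4
  have hval : ((π - (-r₁ + r₂ + r₃)) / 2 + (π - (r₁ - r₂ + r₃)) / 2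
      + (π - (r₁ + r₂ - r₃)) / 2 - (π - (r₁ + r₂ + r₃)) / 2) / 4 = π / 4 := by ring
  rw [hval] at H
  convert H using 1
  funext N
  rw [← Finset.sum_add_distrib, ← Finset.sum_add_distrib, ← Finset.sum_sub_distrib,
    Finset.sum_div]
  refine Finset.sum_congr rfl fun k _ => ?_
  have ht : (0:ℝ) < (k : ℝ) + 1 := by positivity
  field_simp
  rw [show ((k:ℝ)+1) * (-r₁ + r₂ + r₃) = -(((k:ℝ)+1)*r₁) + ((k:ℝ)+1)*r₂ + ((k:ℝ)+1)*r₃ by ring,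
    show ((k:ℝ)+1) * (r₁ - r₂ + r₃) = ((k:ℝ)+1)*r₁ - ((k:ℝ)+1)*r₂ + ((k:ℝ)+1)*r₃ by ring,
    show ((k:ℝ)+1) * (r₁ + r₂ - r₃) = ((k:ℝ)+1)*r₁ + ((k:ℝ)+1)*r₂ - ((k:ℝ)+1)*r₃ by ring,
    show ((k:ℝ)+1) * (r₁ + r₂ + r₃) = ((k:ℝ)+1)*r₁ + ((k:ℝ)+1)*r₂ + ((k:ℝ)+1)*r₃ by ring]
  simp only [Real.sin_add, Real.sin_sub, Real.cos_add, Real.cos_sub, Real.sin_neg, Real.cos_neg]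
  ring
end

section
/- There exists ε_0 > 0 such that for all ε with 0 < ε < ε_0, Σ_{k=1}^∞ sin(k(4π/5 + ε))·sin(k(4π/5 − ε))·(sin(4kπ/5))^3/k^3 = Σ_{k=1}^∞ (sin(4kπ/5))^5/k^3. That is, for a pentagon with perimeter 4π, the regular pentagon with all side-lengths 4π/5 is not the unique maximizer of the symplectic volume among pentagons with that perimeter: perturbing two sides to 4π/5 ± ε leaves the volume unchanged. -/
open Real

lemma trig_prod (u v : ℝ) :
    Real.sin (u + v) * Real.sin (u - v) = Real.sin u ^ 2 - Real.sin v ^ 2 := by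
  simp only [Real.sin_add, Real.sin_sub]
  linear_combination (-(Real.sin v ^ 2)) * Real.sin_sq_add_cos_sq u +
    Real.sin u ^ 2 * Real.sin_sq_add_cos_sq v

lemma trig_pow5 (u : ℝ) :
    Real.sin u ^ 5 = (10 * Real.sin u - 5 * Real.sin (3 * u) + Real.sin (5 * u)) / 16 := by
  have h5 : (5 : ℝ) * u = 2 * u + 3 * u := by ring
  rw [h5, Real.sin_add, Real.sin_two_mul, Real.cos_two_mul, Real.sin_three_mul,
    Real.cos_three_mul]
  linear_combination ((-1/2) * Real.sin u - 1/2 * Real.sin u * Real.cos u ^ 2 +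
    Real.sin u ^ 3) * Real.sin_sq_add_cos_sq u

lemma trig_D (u v : ℝ) :
    Real.sin v ^ 2 * Real.sin u ^ 3 =
      3/8 * Real.sin u - 1/8 * Real.sin (3 * u)
      - 3/16 * (Real.sin (u + 2 * v) + Real.sin (u - 2 * v))
      + 1/16 * (Real.sin (3 * u + 2 * v) + Real.sin (3 * u - 2 * v)) := by
  simp only [Real.sin_add, Real.sin_sub, Real.sin_three_mul, Real.cos_three_mul,
    Real.sin_two_mul, Real.cos_two_mul]
  linear_combination (Real.sin u ^ 3) * Real.sin_sq_add_cos_sq v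

lemma hg_sum {θ : ℝ} (h0 : 0 ≤ θ) (h1 : θ ≤ 2 * π) :
    HasSum (fun k : ℕ => Real.sin (((k : ℝ) + 1) * θ) / ((k : ℝ) + 1) ^ 3)
      (θ ^ 3 / 12 - π * θ ^ 2 / 4 + π ^ 2 * θ / 6) := by
  have hπ : (0:ℝ) < π := Real.pi_pos
  have hx : θ / (2 * π) ∈ Set.Icc (0:ℝ) 1 := by
    constructor
    · positivity
    · rw [div_le_one (by positivity)]; exact h1
  have H := hasSum_one_div_nat_pow_mul_sin (k := 1) one_ne_zero hx
  have hval : (-1 : ℝ) ^ (1 + 1) * (2 * π) ^ (2 * 1 + 1) / 2 / ((2 * 1 + 1).factorial : ℝ) *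
      (Polynomial.map (algebraMap ℚ ℝ) (Polynomial.bernoulli (2 * 1 + 1))).eval (θ / (2 * π)) =
      θ ^ 3 / 12 - π * θ ^ 2 / 4 + π ^ 2 * θ / 6 := by
    have hb : (Polynomial.map (algebraMap ℚ ℝ) (Polynomial.bernoulli (2 * 1 + 1))).eval
        (θ / (2 * π)) = (θ / (2*π)) ^ 3 - 3/2 * (θ / (2*π)) ^ 2 + 1/2 * (θ / (2*π)) := by
      norm_num
      simp [Polynomial.bernoulli, Finset.sum_range_succ, Polynomial.eval_finset_sum]
      norm_num [bernoulli, bernoulli'_two, bernoulli'_three]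
      ring_nf
    rw [hb]
    norm_num [Nat.factorial]
    field_simp
    ring
  rw [hval] at H
  have hterm : ∀ n : ℕ, (1 : ℝ) / (n : ℝ) ^ (2 * 1 + 1) * Real.sin (2 * π * n * (θ / (2 * π)))
      = Real.sin ((n : ℝ) * θ) / (n : ℝ) ^ 3 := by
    intro n
    have : 2 * π * (n : ℝ) * (θ / (2 * π)) = (n : ℝ) * θ := by field_simp
    rw [this]; ring_nf
  simp only [hterm] at H
  have := (hasSum_nat_add_iff (f := fun n : ℕ => Real.sin ((n : ℝ) * θ) / (n : ℝ) ^ 3) 1).mpr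
    (by simpa using H)
  simpa [add_comm] using this

theorem pentagon_not_unique_max :
    ∃ ε₀ > 0, ∀ ε : ℝ, 0 < ε → ε < ε₀ →
      ∑' k : ℕ, Real.sin (((k : ℝ) + 1) * (4 * π / 5 + ε)) *
          Real.sin (((k : ℝ) + 1) * (4 * π / 5 - ε)) *
          (Real.sin (((k : ℝ) + 1) * (4 * π / 5))) ^ 3 / ((k : ℝ) + 1) ^ 3 =
      ∑' k : ℕ, (Real.sin (((k : ℝ) + 1) * (4 * π / 5))) ^ 5 / ((k : ℝ) + 1) ^ 3 := by
  have hπ : (0:ℝ) < π := Real.pi_pos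
  refine ⟨π / 5, by positivity, ?_⟩
  intro ε hε hε'
  -- shift lemmas
  have h3 : ∀ k : ℕ, Real.sin (3 * (((k:ℝ)+1) * (4 * π / 5)))
      = Real.sin (((k:ℝ)+1) * (2 * π / 5)) := by
    intro k
    have he : 3 * (((k:ℝ)+1) * (4 * π / 5))
        = ((k:ℝ)+1) * (2 * π / 5) + (((k+1) : ℤ) : ℝ) * (2 * π) := by push_cast; ring
    rw [he, Real.sin_add_int_mul_two_pi]
  have h5 : ∀ k : ℕ, Real.sin (5 * (((k:ℝ)+1) * (4 * π / 5))) = 0 := by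
    intro k
    have he : 5 * (((k:ℝ)+1) * (4 * π / 5)) = 0 + ((2*(k+1) : ℤ) : ℝ) * (2 * π) := by
      push_cast; ring
    rw [he, Real.sin_add_int_mul_two_pi, Real.sin_zero]
  have h3p : ∀ k : ℕ, Real.sin (3 * (((k:ℝ)+1) * (4 * π / 5)) + 2 * (((k:ℝ)+1) * ε))
      = Real.sin (((k:ℝ)+1) * (2 * π / 5 + 2 * ε)) := by
    intro k
    have he : 3 * (((k:ℝ)+1) * (4 * π / 5)) + 2 * (((k:ℝ)+1) * ε)
        = ((k:ℝ)+1) * (2 * π / 5 + 2 * ε) + (((k+1) : ℤ) : ℝ) * (2 * π) := by push_cast; ring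
    rw [he, Real.sin_add_int_mul_two_pi]
  have h3m : ∀ k : ℕ, Real.sin (3 * (((k:ℝ)+1) * (4 * π / 5)) - 2 * (((k:ℝ)+1) * ε))
      = Real.sin (((k:ℝ)+1) * (2 * π / 5 - 2 * ε)) := by
    intro k
    have he : 3 * (((k:ℝ)+1) * (4 * π / 5)) - 2 * (((k:ℝ)+1) * ε)
        = ((k:ℝ)+1) * (2 * π / 5 - 2 * ε) + (((k+1) : ℤ) : ℝ) * (2 * π) := by push_cast; ring
    rw [he, Real.sin_add_int_mul_two_pi]
  -- six basic sums
  have hA := hg_sum (θ := 4 * π / 5) (by positivity) (by nlinarith)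
  have hB := hg_sum (θ := 2 * π / 5) (by positivity) (by nlinarith)
  have hP := hg_sum (θ := 4 * π / 5 + 2 * ε) (by nlinarith) (by nlinarith)
  have hQ := hg_sum (θ := 4 * π / 5 - 2 * ε) (by nlinarith) (by nlinarith)
  have hR := hg_sum (θ := 2 * π / 5 + 2 * ε) (by nlinarith) (by nlinarith)
  have hS := hg_sum (θ := 2 * π / 5 - 2 * ε) (by nlinarith) (by nlinarith)
  -- RHS series
  have hRight : HasSum
      (fun k : ℕ => (Real.sin (((k : ℝ) + 1) * (4 * π / 5))) ^ 5 / ((k : ℝ) + 1) ^ 3)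
      (10/16 * ((4*π/5) ^ 3 / 12 - π * (4*π/5) ^ 2 / 4 + π ^ 2 * (4*π/5) / 6)
        - 5/16 * ((2*π/5) ^ 3 / 12 - π * (2*π/5) ^ 2 / 4 + π ^ 2 * (2*π/5) / 6)) := by
    have h := (hA.mul_left (10/16)).sub (hB.mul_left (5/16))
    have heq : ∀ k : ℕ,
        10/16 * (Real.sin (((k : ℝ) + 1) * (4 * π / 5)) / ((k : ℝ) + 1) ^ 3)
        - 5/16 * (Real.sin (((k : ℝ) + 1) * (2 * π / 5)) / ((k : ℝ) + 1) ^ 3)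
        = (Real.sin (((k : ℝ) + 1) * (4 * π / 5))) ^ 5 / ((k : ℝ) + 1) ^ 3 := by
      intro k
      rw [trig_pow5 (((k : ℝ) + 1) * (4 * π / 5)), h3 k, h5 k]
      ring
    simpa only [heq] using h
  -- difference series
  have hD : HasSum
      (fun k : ℕ => Real.sin (((k : ℝ) + 1) * ε) ^ 2 *
        (Real.sin (((k : ℝ) + 1) * (4 * π / 5))) ^ 3 / ((k : ℝ) + 1) ^ 3)
      (3/8 * ((4*π/5) ^ 3 / 12 - π * (4*π/5) ^ 2 / 4 + π ^ 2 * (4*π/5) / 6)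
        - 1/8 * ((2*π/5) ^ 3 / 12 - π * (2*π/5) ^ 2 / 4 + π ^ 2 * (2*π/5) / 6)
        - 3/16 * (((4*π/5+2*ε) ^ 3 / 12 - π * (4*π/5+2*ε) ^ 2 / 4 + π ^ 2 * (4*π/5+2*ε) / 6)
          + ((4*π/5-2*ε) ^ 3 / 12 - π * (4*π/5-2*ε) ^ 2 / 4 + π ^ 2 * (4*π/5-2*ε) / 6))
        + 1/16 * (((2*π/5+2*ε) ^ 3 / 12 - π * (2*π/5+2*ε) ^ 2 / 4 + π ^ 2 * (2*π/5+2*ε) / 6)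
          + ((2*π/5-2*ε) ^ 3 / 12 - π * (2*π/5-2*ε) ^ 2 / 4 + π ^ 2 * (2*π/5-2*ε) / 6))) := by
    have h := (((hA.mul_left (3/8)).sub (hB.mul_left (1/8))).sub
      ((hP.add hQ).mul_left (3/16))).add ((hR.add hS).mul_left (1/16))
    have heq : ∀ k : ℕ,
        3/8 * (Real.sin (((k : ℝ) + 1) * (4 * π / 5)) / ((k : ℝ) + 1) ^ 3)
        - 1/8 * (Real.sin (((k : ℝ) + 1) * (2 * π / 5)) / ((k : ℝ) + 1) ^ 3)
        - 3/16 * (Real.sin (((k : ℝ) + 1) * (4 * π / 5 + 2 * ε)) / ((k : ℝ) + 1) ^ 3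
          + Real.sin (((k : ℝ) + 1) * (4 * π / 5 - 2 * ε)) / ((k : ℝ) + 1) ^ 3)
        + 1/16 * (Real.sin (((k : ℝ) + 1) * (2 * π / 5 + 2 * ε)) / ((k : ℝ) + 1) ^ 3
          + Real.sin (((k : ℝ) + 1) * (2 * π / 5 - 2 * ε)) / ((k : ℝ) + 1) ^ 3)
        = Real.sin (((k : ℝ) + 1) * ε) ^ 2 *
            (Real.sin (((k : ℝ) + 1) * (4 * π / 5))) ^ 3 / ((k : ℝ) + 1) ^ 3 := by
      intro k
      have hup : ((k:ℝ)+1) * (4 * π / 5 + 2 * ε)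
          = ((k:ℝ)+1) * (4 * π / 5) + 2 * (((k:ℝ)+1) * ε) := by ring
      have hum : ((k:ℝ)+1) * (4 * π / 5 - 2 * ε)
          = ((k:ℝ)+1) * (4 * π / 5) - 2 * (((k:ℝ)+1) * ε) := by ring
      rw [← h3p k, ← h3m k, hup, hum,
        trig_D (((k : ℝ) + 1) * (4 * π / 5)) (((k : ℝ) + 1) * ε), h3 k]
      ring
    simpa only [heq] using h
  -- LHS series
  have hLeft : HasSum
      (fun k : ℕ => Real.sin (((k : ℝ) + 1) * (4 * π / 5 + ε)) *
          Real.sin (((k : ℝ) + 1) * (4 * π / 5 - ε)) *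
          (Real.sin (((k : ℝ) + 1) * (4 * π / 5))) ^ 3 / ((k : ℝ) + 1) ^ 3)
      ((10/16 * ((4*π/5) ^ 3 / 12 - π * (4*π/5) ^ 2 / 4 + π ^ 2 * (4*π/5) / 6)
        - 5/16 * ((2*π/5) ^ 3 / 12 - π * (2*π/5) ^ 2 / 4 + π ^ 2 * (2*π/5) / 6))
       - (3/8 * ((4*π/5) ^ 3 / 12 - π * (4*π/5) ^ 2 / 4 + π ^ 2 * (4*π/5) / 6)
        - 1/8 * ((2*π/5) ^ 3 / 12 - π * (2*π/5) ^ 2 / 4 + π ^ 2 * (2*π/5) / 6)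
        - 3/16 * (((4*π/5+2*ε) ^ 3 / 12 - π * (4*π/5+2*ε) ^ 2 / 4 + π ^ 2 * (4*π/5+2*ε) / 6)
          + ((4*π/5-2*ε) ^ 3 / 12 - π * (4*π/5-2*ε) ^ 2 / 4 + π ^ 2 * (4*π/5-2*ε) / 6))
        + 1/16 * (((2*π/5+2*ε) ^ 3 / 12 - π * (2*π/5+2*ε) ^ 2 / 4 + π ^ 2 * (2*π/5+2*ε) / 6)
          + ((2*π/5-2*ε) ^ 3 / 12 - π * (2*π/5-2*ε) ^ 2 / 4 + π ^ 2 * (2*π/5-2*ε) / 6)))) := by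
    have h := hRight.sub hD
    have heq : ∀ k : ℕ,
        (Real.sin (((k : ℝ) + 1) * (4 * π / 5))) ^ 5 / ((k : ℝ) + 1) ^ 3
        - Real.sin (((k : ℝ) + 1) * ε) ^ 2 *
            (Real.sin (((k : ℝ) + 1) * (4 * π / 5))) ^ 3 / ((k : ℝ) + 1) ^ 3
        = Real.sin (((k : ℝ) + 1) * (4 * π / 5 + ε)) *
            Real.sin (((k : ℝ) + 1) * (4 * π / 5 - ε)) *
            (Real.sin (((k : ℝ) + 1) * (4 * π / 5))) ^ 3 / ((k : ℝ) + 1) ^ 3 := by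
      intro k
      have hup : ((k:ℝ)+1) * (4 * π / 5 + ε)
          = ((k:ℝ)+1) * (4 * π / 5) + ((k:ℝ)+1) * ε := by ring
      have hum : ((k:ℝ)+1) * (4 * π / 5 - ε)
          = ((k:ℝ)+1) * (4 * π / 5) - ((k:ℝ)+1) * ε := by ring
      rw [hup, hum, trig_prod (((k : ℝ) + 1) * (4 * π / 5)) (((k : ℝ) + 1) * ε)]
      ring
    simpa only [heq] using h
  rw [hLeft.tsum_eq, hRight.tsum_eq]
  ring
end
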